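/- arXiv:1604.02622 — 10 statements merged into one kernel-verified Lean document; each statement's English description precedes it below -/
import Mathlib

section
/- Let g : ℕ → ℕ satisfy g(0) = 0, g(2n) = 4·g(n), and g(2n+1) = g(2n) + 1. If n is a sum of distinct powers of 2, say n = q₁ + ... + q_k with each qᵢ a distinct power of 2, then g(n) = q₁² + ... + q_k². -/
theorem stmt_0 (g : ℕ → ℕ) (hg0 : g 0 = 0)
    (hge : ∀ n, g (2 * n) = 4 * g n)
    (hgo : ∀ n, g (2 * n + 1) = g (2 * n) + 1)
    (S : Finset ℕ) (n : ℕ) (hn : n = ∑ i ∈ S, 2 ^ i) :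
    g n = ∑ i ∈ S, (2 ^ i) ^ 2 := by
  have hsq : ∀ i : ℕ, (2 ^ i) ^ 2 = 4 ^ i := by
    intro i; rw [← pow_mul, mul_comm, pow_mul]; norm_num
  have key : ∀ n : ℕ, ∀ S : Finset ℕ, n = ∑ i ∈ S, 2 ^ i → g n = ∑ i ∈ S, 4 ^ i := by
    intro n
    induction n using Nat.strong_induction_on with
    | _ n ih =>
      intro S hn
      rcases S.eq_empty_or_nonempty with h | h
      · subst h; simp at hn; simp [hn, hg0]
      · set m := ∑ i ∈ S.erase 0, 2 ^ (i - 1) with hm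
        set T : Finset ℕ := (S.erase 0).image (· - 1) with hT
        have hTm : ∑ j ∈ T, 2 ^ j = m := by
          rw [hT, Finset.sum_image]
          intro x hx y hy hxy
          have hx1 : x ≠ 0 := (Finset.mem_erase.1 hx).1
          have hy1 : y ≠ 0 := (Finset.mem_erase.1 hy).1
          simp only at hxy
          omega
        have hTm4 : ∑ j ∈ T, 4 ^ j = ∑ i ∈ S.erase 0, 4 ^ (i - 1) := by
          rw [hT, Finset.sum_image]
          intro x hx y hy hxy
          have hx1 : x ≠ 0 := (Finset.mem_erase.1 hx).1
          have hy1 : y ≠ 0 := (Finset.mem_erase.1 hy).1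
          simp only at hxy
          omega
        have h2m : 2 * m = ∑ i ∈ S.erase 0, 2 ^ i := by
          rw [hm, Finset.mul_sum]
          refine Finset.sum_congr rfl fun i hi => ?_
          have hi0 : i ≠ 0 := (Finset.mem_erase.1 hi).1
          have : 2 ^ i = 2 ^ (i - 1 + 1) := by congr 1; omega
          rw [this, pow_succ]; ring
        have h4m : 4 * ∑ i ∈ S.erase 0, 4 ^ (i - 1) = ∑ i ∈ S.erase 0, 4 ^ i := by
          rw [Finset.mul_sum]
          refine Finset.sum_congr rfl fun i hi => ?_
          have hi0 : i ≠ 0 := (Finset.mem_erase.1 hi).1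
          have : 4 ^ i = 4 ^ (i - 1 + 1) := by congr 1; omega
          rw [this, pow_succ]; ring
        by_cases h0 : 0 ∈ S
        · have hn' : n = 2 * m + 1 := by
            rw [hn, ← Finset.add_sum_erase _ _ h0, h2m]; ring
          have hmn : m < n := by omega
          have := ih m hmn T hTm.symm
          rw [hn', hgo, hge, this, hTm4, ← Finset.add_sum_erase _ _ h0, ← h4m]
          ring
        · have hS0 : S.erase 0 = S := Finset.erase_eq_of_notMem h0
          have hn' : n = 2 * m := by rw [hn, ← hS0, ← h2m]
          have hnpos : 0 < n := by
            rw [hn]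
            obtain ⟨a, ha⟩ := h
            exact lt_of_lt_of_le (pow_pos (by norm_num : (0:ℕ) < 2) a)
              (Finset.single_le_sum (fun i _ => Nat.zero_le _) ha)
          have hmn : m < n := by omega
          have hgm := ih m hmn T hTm.symm
          rw [hn', hge, hgm, hTm4, h4m, hS0]
      -- end
  rw [key n S hn]
  exact (Finset.sum_congr rfl fun i _ => (hsq i).symm)
end

section
/- Let g : ℕ → ℕ be defined by g(0)=0, g(2n)=4g(n), g(2n+1)=g(2n)+1. Then every natural number n can be written uniquely as n = g(a) + 2·g(b) for some a, b in ℕ. -/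
theorem stmt_1 (g : ℕ → ℕ) (hg0 : g 0 = 0)
    (hge : ∀ n, g (2 * n) = 4 * g n)
    (hgo : ∀ n, g (2 * n + 1) = g (2 * n) + 1)
    (n : ℕ) :
    ∃! p : ℕ × ℕ, n = g p.1 + 2 * g p.2 := by
  -- master identity
  have key : ∀ a, g a = 4 * g (a / 2) + a % 2 := by
    intro a
    rcases Nat.even_or_odd a with ⟨k, hk⟩ | ⟨k, hk⟩
    · have h2 : a = 2 * k := by omega
      subst h2
      rw [hge]
      have : 2 * k / 2 = k := by omega
      rw [this]
      omega
    · subst hk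
      rw [hgo, hge]
      have h1 : (2 * k + 1) / 2 = k := by omega
      have h2 : (2 * k + 1) % 2 = 1 := by omega
      rw [h1, h2]
  have gz : ∀ a, g a = 0 → a = 0 := by
    intro a
    induction a using Nat.strong_induction_on with
    | _ a ih =>
      intro h
      have hk := key a
      by_contra hne
      have hlt : a / 2 < a := Nat.div_lt_self (Nat.pos_of_ne_zero hne) one_lt_two
      have := ih (a / 2) hlt (by omega)
      omega
  have exist : ∀ m, ∃ a b, m = g a + 2 * g b := by
    intro m
    induction m using Nat.strong_induction_on with
    | _ m ih =>
      rcases Nat.eq_zero_or_pos m with h0 | hpos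
      · exact ⟨0, 0, by simp [h0, hg0]⟩
      · have hlt : m / 4 < m := Nat.div_lt_self hpos (by norm_num)
        obtain ⟨a, b, hab⟩ := ih (m / 4) hlt
        refine ⟨2 * a + m % 2, 2 * b + m / 2 % 2, ?_⟩
        have k1 := key (2 * a + m % 2)
        have k2 := key (2 * b + m / 2 % 2)
        have e1 : (2 * a + m % 2) / 2 = a := by omega
        have e2 : (2 * b + m / 2 % 2) / 2 = b := by omega
        rw [e1] at k1
        rw [e2] at k2
        omega
  have uniq : ∀ m a b a' b', m = g a + 2 * g b → m = g a' + 2 * g b' →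
      a = a' ∧ b = b' := by
    intro m
    induction m using Nat.strong_induction_on with
    | _ m ih =>
      intro a b a' b' h h'
      rcases Nat.eq_zero_or_pos m with h0 | hpos
      · subst h0
        have ha : a = 0 := gz a (by omega)
        have hb : b = 0 := gz b (by omega)
        have ha' : a' = 0 := gz a' (by omega)
        have hb' : b' = 0 := gz b' (by omega)
        exact ⟨by omega, by omega⟩
      · have hlt : m / 4 < m := Nat.div_lt_self hpos (by norm_num)
        have ka := key a
        have kb := key b
        have ka' := key a'
        have kb' := key b'
        have h1 : m / 4 = g (a / 2) + 2 * g (b / 2) := by omega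
        have h2 : m / 4 = g (a' / 2) + 2 * g (b' / 2) := by omega
        obtain ⟨e1, e2⟩ := ih (m / 4) hlt (a / 2) (b / 2) (a' / 2) (b' / 2) h1 h2
        constructor <;> omega
  obtain ⟨a, b, hab⟩ := exist n
  refine ⟨⟨a, b⟩, hab, ?_⟩
  rintro ⟨a', b'⟩ h'
  obtain ⟨e1, e2⟩ := uniq n a' b' a b h' hab
  simp [e1, e2]
end

section
/- Let g be the Nicolas–Serre digit function, q a power of 2, and define [a,b] to be the odd number 1 + 2g(a) + 4g(b). If ⌊b/q⌋ is even, then [a, b+q] = [a,b] + 4q². -/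
theorem stmt_4 (g : ℕ → ℕ) (hg0 : g 0 = 0)
    (hge : ∀ n, g (2 * n) = 4 * g n)
    (hgo : ∀ n, g (2 * n + 1) = g (2 * n) + 1)
    (q : ℕ) (hq : ∃ e : ℕ, q = 2 ^ e)
    (a b : ℕ) (hb : Even (b / q)) :
    1 + 2 * g a + 4 * g (b + q) = (1 + 2 * g a + 4 * g b) + 4 * q ^ 2 := by
  obtain ⟨e, rfl⟩ := hq
  have key : ∀ e b, Even (b / 2 ^ e) → g (b + 2 ^ e) = g b + 4 ^ e := by
    intro e
    induction e with
    | zero =>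
      intro b hb
      simp only [pow_zero, Nat.div_one] at hb ⊢
      obtain ⟨m, rfl⟩ := hb
      have h1 : m + m + 1 = 2 * m + 1 := by ring
      have h2 : m + m = 2 * m := by ring
      rw [h1, hgo, h2]
    | succ e ih =>
      intro b hb
      rcases Nat.even_or_odd b with ⟨m, rfl⟩ | ⟨m, rfl⟩
      · have hdiv : (m + m) / 2 ^ (e + 1) = m / 2 ^ e := by
          rw [pow_succ, mul_comm (2 ^ e) 2, ← two_mul, Nat.mul_div_mul_left _ _ (by norm_num)]
        rw [hdiv] at hb
        have h1 : m + m + 2 ^ (e + 1) = 2 * (m + 2 ^ e) := by ring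
        have h2 : m + m = 2 * m := by ring
        rw [h1, hge, ih m hb, h2, hge]; ring
      · have hdiv : (2 * m + 1) / 2 ^ (e + 1) = m / 2 ^ e := by
          rw [pow_succ', ← Nat.div_div_eq_div_mul]
          congr 1
          omega
        rw [hdiv] at hb
        have h1 : 2 * m + 1 + 2 ^ (e + 1) = 2 * (m + 2 ^ e) + 1 := by ring
        rw [h1, hgo, hge, ih m hb, hgo, hge]; ring
  rw [key e b hb]
  have h4 : (4 : ℕ) ^ e = (2 ^ e) ^ 2 := by
    rw [← pow_mul, mul_comm, pow_mul]; norm_num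
  rw [h4]; ring
end

section
/- Define a strict order on ℕ × ℕ by (c,d) < (a,b) iff c+d < a+b, or c+d = a+b and d < b. Let q be a power of 2 and n = 1 + 2g(a) + 4g(b) where g is the Nicolas–Serre digit function. If ⌊a/q⌋ is odd, then the pair (c,d) with 1 + 2g(c) + 4g(d) = n + 2q² satisfies (c,d) < (a+q, b). -/
/-- `(c,d)` strictly precedes `(a,b)` in the Nicolas–Serre order. -/
def prec (c d a b : ℕ) : Prop := c + d < a + b ∨ (c + d = a + b ∧ d < b)

/-- The Nicolas–Serre digit function, defined concretely. -/
def G : ℕ → ℕ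
  | 0 => 0
  | n+1 => 4 * G ((n+1)/2) + (n+1) % 2
  decreasing_by exact Nat.div_lt_self (Nat.succ_pos n) (by norm_num)

lemma Gsplit (n : ℕ) : G n = 4 * G (n/2) + n % 2 := by
  cases n with
  | zero => simp [G]
  | succ m => rw [G]

lemma Esum : ∀ N a b c d : ℕ, a+b+c+d ≤ N →
    2*G a + 4*G b = 2*G c + 4*G d → a+b = c+d := by
  intro N
  induction N with
  | zero =>
    intro a b c d h _
    omega
  | succ N ih =>
    intro a b c d hle heq
    by_cases h0 : a+b+c+d = 0
    · omega
    · rw [Gsplit a, Gsplit b, Gsplit c, Gsplit d] at heq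
      have h1 := ih (a/2) (b/2) (c/2) (d/2) (by omega) (by omega)
      omega

lemma main : ∀ N e a b c d : ℕ, a+b+c+d ≤ N →
    (2*G a + 4*G b + 2*4^e = 2*G c + 4*G d →
      c+d ≤ a+b+2^e ∧ (a / 2^e % 2 = 1 → c+d < a+b+2^e)) ∧
    (2*G a + 4*G b + 4*4^e = 2*G c + 4*G d → c+d ≤ a+b+2^e) := by
  intro N
  induction N with
  | zero =>
    intro e a b c d h
    have ha : a = 0 ∧ b = 0 ∧ c = 0 ∧ d = 0 := by omega
    obtain ⟨rfl, rfl, rfl, rfl⟩ := ha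
    have hG : G 0 = 0 := by simp [G]
    have h4 : 0 < (4:ℕ)^e := pow_pos (by norm_num) e
    constructor
    · intro heq; rw [hG] at heq; omega
    · intro heq; rw [hG] at heq; omega
  | succ N ih =>
    intro e a b c d hle
    by_cases h0 : a+b+c+d = 0
    · have ha : a = 0 ∧ b = 0 ∧ c = 0 ∧ d = 0 := by omega
      obtain ⟨rfl, rfl, rfl, rfl⟩ := ha
      have hG : G 0 = 0 := by simp [G]
      have h4 : 0 < (4:ℕ)^e := pow_pos (by norm_num) e
      constructor
      · intro heq; rw [hG] at heq; omega
      · intro heq; rw [hG] at heq; omega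
    cases e with
    | zero =>
      constructor
      · intro heq
        rw [Gsplit a, Gsplit b, Gsplit c, Gsplit d] at heq
        simp only [pow_zero, mul_one] at heq ⊢
        by_cases hα : a % 2 = 0
        · have h1 : 2*G (a/2) + 4*G (b/2) = 2*G (c/2) + 4*G (d/2) := by omega
          have h2 := Esum N (a/2) (b/2) (c/2) (d/2) (by omega) h1
          exact ⟨by omega, fun hb => by omega⟩
        · by_cases hβ : b % 2 = 0
          · have h1 : 2*G (a/2) + 4*G (b/2) = 2*G (c/2) + 4*G (d/2) := by omega
            have h2 := Esum N (a/2) (b/2) (c/2) (d/2) (by omega) h1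
            exact ⟨by omega, fun hb => by omega⟩
          · have h1 : 2*G (a/2) + 4*G (b/2) + 2 = 2*G (c/2) + 4*G (d/2) := by omega
            have h2 := ((ih 0 (a/2) (b/2) (c/2) (d/2) (by omega)).1
              (by simp only [pow_zero, mul_one]; exact h1)).1
            simp only [pow_zero] at h2
            exact ⟨by omega, fun hb => by omega⟩
      · intro heq
        rw [Gsplit a, Gsplit b, Gsplit c, Gsplit d] at heq
        simp only [pow_zero, mul_one] at heq ⊢
        by_cases hβ : b % 2 = 0
        · have h1 : 2*G (a/2) + 4*G (b/2) = 2*G (c/2) + 4*G (d/2) := by omega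
          have h2 := Esum N (a/2) (b/2) (c/2) (d/2) (by omega) h1
          omega
        · have h1 : 2*G (a/2) + 4*G (b/2) + 2 = 2*G (c/2) + 4*G (d/2) := by omega
          have h2 := ((ih 0 (a/2) (b/2) (c/2) (d/2) (by omega)).1
            (by simp only [pow_zero, mul_one]; exact h1)).1
          simp only [pow_zero] at h2
          omega
    | succ e' =>
      constructor
      · intro heq
        rw [Gsplit a, Gsplit b, Gsplit c, Gsplit d, pow_succ] at heq
        have h1 : 2*G (a/2) + 4*G (b/2) + 2*4^e' = 2*G (c/2) + 4*G (d/2) := by omega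
        obtain ⟨hw, hs⟩ := (ih e' (a/2) (b/2) (c/2) (d/2) (by omega)).1 h1
        constructor
        · rw [pow_succ]; omega
        · intro hbit
          have hb' : a/2 / 2^e' % 2 = 1 := by
            rw [Nat.div_div_eq_div_mul, ← pow_succ']
            exact hbit
          have := hs hb'
          rw [pow_succ]; omega
      · intro heq
        rw [Gsplit a, Gsplit b, Gsplit c, Gsplit d, pow_succ] at heq
        have h1 : 2*G (a/2) + 4*G (b/2) + 4*4^e' = 2*G (c/2) + 4*G (d/2) := by omega
        have hw := (ih e' (a/2) (b/2) (c/2) (d/2) (by omega)).2 h1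
        rw [pow_succ]; omega

lemma g_eq (g : ℕ → ℕ) (hg0 : g 0 = 0)
    (hge : ∀ n, g (2 * n) = 4 * g n)
    (hgo : ∀ n, g (2 * n + 1) = g (2 * n) + 1) : ∀ n, g n = G n := by
  intro n
  induction n using Nat.strong_induction_on with
  | _ n ih =>
    rcases Nat.even_or_odd n with ⟨k, hk⟩ | ⟨k, hk⟩
    · rcases Nat.eq_zero_or_pos k with rfl | hkpos
      · have : n = 0 := by omega
        subst this; rw [hg0]; simp [G]
      · have hn : n = 2 * k := by omega
        subst hn
        rw [hge k, ih k (by omega), Gsplit (2*k)]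
        have : 2*k/2 = k := by omega
        rw [this]; omega
    · have hn : n = 2 * k + 1 := by omega
      subst hn
      rw [hgo k, hge k, ih k (by omega), Gsplit (2*k+1)]
      have : (2*k+1)/2 = k := by omega
      rw [this]; omega

theorem stmt_6 (g : ℕ → ℕ) (hg0 : g 0 = 0)
    (hge : ∀ n, g (2 * n) = 4 * g n)
    (hgo : ∀ n, g (2 * n + 1) = g (2 * n) + 1)
    (q : ℕ) (hq : ∃ e : ℕ, q = 2 ^ e)
    (a b : ℕ) (ha : Odd (a / q))
    (c d : ℕ) (hcd : 1 + 2 * g c + 4 * g d = (1 + 2 * g a + 4 * g b) + 2 * q ^ 2) :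
    prec c d (a + q) b := by
  obtain ⟨e, rfl⟩ := hq
  have hge' := g_eq g hg0 hge hgo
  rw [hge' a, hge' b, hge' c, hge' d] at hcd
  have hq2 : ((2:ℕ)^e)^2 = 4^e := by
    rw [← pow_mul, mul_comm, pow_mul]; norm_num
  rw [hq2] at hcd
  have heq : 2*G a + 4*G b + 2*4^e = 2*G c + 4*G d := by omega
  have hbit : a / 2^e % 2 = 1 := Nat.odd_iff.mp ha
  have h := ((main (a+b+c+d) e a b c d le_rfl).1 heq).2 hbit
  exact Or.inl (by omega)
end

section
/- Define a strict order on ℕ × ℕ by (c,d) < (a,b) iff c+d < a+b, or c+d = a+b and d < b. Let q be a power of 2 and n = 1 + 2g(a) + 4g(b). If ⌊b/q⌋ is odd, then the pair (c,d) with 1 + 2g(c) + 4g(d) = n + 4q² satisfies (c,d) < (a, b+q). -/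
section aux

variable (g : ℕ → ℕ) (hg0 : g 0 = 0)
    (hge : ∀ n, g (2 * n) = 4 * g n)
    (hgo : ∀ n, g (2 * n + 1) = g (2 * n) + 1)

include hg0 hge hgo

lemma g_odd' : ∀ n, g (2 * n + 1) = 4 * g n + 1 := fun n => by rw [hgo, hge]

lemma g_par : ∀ n, g n % 2 = n % 2 := by
  intro n
  obtain ⟨k, hk | hk⟩ := Nat.even_or_odd' n
  · subst hk; rw [hge]; omega
  · subst hk; rw [hgo, hge]; omega

lemma g_inj : ∀ N y v, y + v ≤ N → g y = g v → y = v := by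
  intro N
  induction N using Nat.strong_induction_on with
  | _ N IH =>
    intro y v hle heq
    obtain ⟨y₁, hy | hy⟩ := Nat.even_or_odd' y <;>
      obtain ⟨v₁, hv | hv⟩ := Nat.even_or_odd' v <;> subst hy <;> subst hv
    · rw [hge, hge] at heq
      rcases Nat.eq_zero_or_pos (y₁ + v₁) with h | h
      · omega
      · have := IH (y₁ + v₁) (by omega) y₁ v₁ le_rfl (by omega)
        omega
    · rw [hge, g_odd' g hg0 hge hgo] at heq; omega
    · rw [hge, g_odd' g hg0 hge hgo] at heq; omega
    · rw [g_odd' g hg0 hge hgo, g_odd' g hg0 hge hgo] at heq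
      have := IH (y₁ + v₁) (by omega) y₁ v₁ le_rfl (by omega)
      omega

lemma g_inj2 : ∀ N x y u v, x + y + u + v ≤ N →
    g x + 2 * g y = g u + 2 * g v → x = u ∧ y = v := by
  intro N
  induction N using Nat.strong_induction_on with
  | _ N IH =>
    intro x y u v hle heq
    have hpx := g_par g hg0 hge hgo x
    have hpu := g_par g hg0 hge hgo u
    have hpy := g_par g hg0 hge hgo y
    have hpv := g_par g hg0 hge hgo v
    obtain ⟨x₁, hx | hx⟩ := Nat.even_or_odd' x <;>
      obtain ⟨u₁, hu | hu⟩ := Nat.even_or_odd' u <;> subst hx <;> subst hu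
    · rw [hge, hge] at heq
      rcases Nat.eq_zero_or_pos (x₁ + u₁) with h | h
      · have hx0 : x₁ = 0 := by omega
        have hu0 : u₁ = 0 := by omega
        subst hx0; subst hu0
        have hyv : y = v := g_inj g hg0 hge hgo N y v (by omega) (by omega)
        exact ⟨rfl, hyv⟩
      · have := IH (y + x₁ + v + u₁) (by omega) y x₁ v u₁ le_rfl (by omega)
        exact ⟨by omega, this.1⟩
    · rw [hge, g_odd' g hg0 hge hgo] at heq; omega
    · rw [hge, g_odd' g hg0 hge hgo] at heq; omega
    · rw [g_odd' g hg0 hge hgo, g_odd' g hg0 hge hgo] at heq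
      have := IH (y + x₁ + v + u₁) (by omega) y x₁ v u₁ le_rfl (by omega)
      exact ⟨by omega, this.1⟩

lemma lemB : ∀ a b c d, g c + 2 * g d = g a + 2 * g b + 1 → prec c d a (b + 1) := by
  intro a
  induction a using Nat.strong_induction_on with
  | _ a IH =>
    intro b c d heq
    have hpc := g_par g hg0 hge hgo c
    have hpa := g_par g hg0 hge hgo a
    have hpb := g_par g hg0 hge hgo b
    have hpd := g_par g hg0 hge hgo d
    obtain ⟨a₁, ha | ha⟩ := Nat.even_or_odd' a <;>
      obtain ⟨c₁, hc | hc⟩ := Nat.even_or_odd' c <;> subst ha <;> subst hc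
    · rw [hge, hge] at heq; omega
    · -- a even, c odd
      rw [hge, g_odd' g hg0 hge hgo] at heq
      have heq2 : g d + 2 * g c₁ = g b + 2 * g a₁ := by omega
      obtain ⟨h1, h2⟩ := g_inj2 g hg0 hge hgo (d + c₁ + b + a₁) d c₁ b a₁ le_rfl heq2
      unfold prec; omega
    · -- a odd, c even
      rw [hge, g_odd' g hg0 hge hgo] at heq
      -- heq : 4 * g c₁ + 2 * g d = 4 * g a₁ + 1 + 2 * g b + 1
      obtain ⟨b₁, hb | hb⟩ := Nat.even_or_odd' b <;>
        obtain ⟨d₁, hd | hd⟩ := Nat.even_or_odd' d <;> subst hb <;> subst hd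
      · rw [hge, hge] at heq; omega
      · rw [hge, g_odd' g hg0 hge hgo] at heq
        have heq2 : g c₁ + 2 * g d₁ = g a₁ + 2 * g b₁ := by omega
        obtain ⟨h1, h2⟩ := g_inj2 g hg0 hge hgo (c₁ + d₁ + a₁ + b₁) c₁ d₁ a₁ b₁ le_rfl heq2
        unfold prec; omega
      · rw [hge, g_odd' g hg0 hge hgo] at heq
        have heq2 : g c₁ + 2 * g d₁ = g a₁ + 2 * g b₁ + 1 := by omega
        have hP := IH a₁ (by omega) b₁ c₁ d₁ heq2
        unfold prec at hP ⊢; omega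
      · rw [g_odd' g hg0 hge hgo, g_odd' g hg0 hge hgo] at heq; omega
    · rw [g_odd' g hg0 hge hgo, g_odd' g hg0 hge hgo] at heq; omega

lemma lemM : ∀ e a b c d, Odd (b / 2 ^ e) →
    2 * g c + 4 * g d = 2 * g a + 4 * g b + 4 * 4 ^ e → prec c d a (b + 2 ^ e) := by
  intro e
  induction e with
  | zero =>
    intro a b c d hb heq
    rw [pow_zero, Nat.div_one] at hb
    obtain ⟨b₁, rfl⟩ := hb
    rw [g_odd' g hg0 hge hgo] at heq
    have hpc := g_par g hg0 hge hgo c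
    have hpa := g_par g hg0 hge hgo a
    have hpd := g_par g hg0 hge hgo d
    obtain ⟨a₁, ha | ha⟩ := Nat.even_or_odd' a <;>
      obtain ⟨c₁, hc | hc⟩ := Nat.even_or_odd' c <;> subst ha <;> subst hc
    · rw [hge, hge] at heq
      -- heq : 2*(4*g c₁) + 4*g d = 2*(4*g a₁) + 4*(4*g b₁+1) + 4
      obtain ⟨d₁, hd | hd⟩ := Nat.even_or_odd' d <;> subst hd
      · rw [hge] at heq
        have heq2 : g c₁ + 2 * g d₁ = g a₁ + 2 * g b₁ + 1 := by omega
        have hP := lemB g hg0 hge hgo a₁ b₁ c₁ d₁ heq2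
        unfold prec at hP ⊢
        omega
      · rw [g_odd' g hg0 hge hgo] at heq; omega
    · rw [hge, g_odd' g hg0 hge hgo] at heq; omega
    · rw [hge, g_odd' g hg0 hge hgo] at heq; omega
    · rw [g_odd' g hg0 hge hgo, g_odd' g hg0 hge hgo] at heq
      obtain ⟨d₁, hd | hd⟩ := Nat.even_or_odd' d <;> subst hd
      · rw [hge] at heq
        have heq2 : g c₁ + 2 * g d₁ = g a₁ + 2 * g b₁ + 1 := by omega
        have hP := lemB g hg0 hge hgo a₁ b₁ c₁ d₁ heq2
        unfold prec at hP ⊢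
        omega
      · rw [g_odd' g hg0 hge hgo] at heq; omega
  | succ e IH =>
    intro a b c d hb heq
    obtain ⟨K, hK⟩ : ∃ K, (4:ℕ) ^ e = K := ⟨_, rfl⟩
    obtain ⟨Q, hQ⟩ : ∃ Q, (2:ℕ) ^ e = Q := ⟨_, rfl⟩
    have hpow4 : (4:ℕ) ^ (e + 1) = 4 * K := by rw [pow_succ, hK]; ring
    have hpow2 : (2:ℕ) ^ (e + 1) = 2 * Q := by rw [pow_succ, hQ]; ring
    rw [hK, hQ] at IH
    rw [hpow4] at heq
    rw [hpow2] at hb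
    have hpc := g_par g hg0 hge hgo c
    have hpa := g_par g hg0 hge hgo a
    have hpd := g_par g hg0 hge hgo d
    have hpb := g_par g hg0 hge hgo b
    obtain ⟨a₁, ha | ha⟩ := Nat.even_or_odd' a <;>
      obtain ⟨c₁, hc | hc⟩ := Nat.even_or_odd' c <;> subst ha <;> subst hc
    case _ =>
      rw [hge, hge] at heq
      obtain ⟨b₁, hb' | hb'⟩ := Nat.even_or_odd' b <;>
        obtain ⟨d₁, hd | hd⟩ := Nat.even_or_odd' d <;> subst hb' <;> subst hd
      case _ =>
        rw [hge, hge] at heq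
        have hb₁ : Odd (b₁ / Q) := by
          have : 2 * b₁ / (2 * Q) = b₁ / Q := by
            rw [← Nat.div_div_eq_div_mul, Nat.mul_div_cancel_left _ (by norm_num : 0 < 2)]
          rwa [this] at hb
        have heq2 : 2 * g c₁ + 4 * g d₁ = 2 * g a₁ + 4 * g b₁ + 4 * K := by omega
        have hP := IH a₁ b₁ c₁ d₁ hb₁ heq2
        rw [hpow2]
        unfold prec at hP ⊢
        omega
      · rw [hge, g_odd' g hg0 hge hgo] at heq; omega
      · rw [g_odd' g hg0 hge hgo, hge] at heq; omega
      case _ =>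
        rw [g_odd' g hg0 hge hgo, g_odd' g hg0 hge hgo] at heq
        have hb₁ : Odd (b₁ / Q) := by
          have : (2 * b₁ + 1) / (2 * Q) = b₁ / Q := by
            rw [← Nat.div_div_eq_div_mul]
            congr 1
            omega
          rwa [this] at hb
        have heq2 : 2 * g c₁ + 4 * g d₁ = 2 * g a₁ + 4 * g b₁ + 4 * K := by omega
        have hP := IH a₁ b₁ c₁ d₁ hb₁ heq2
        rw [hpow2]
        unfold prec at hP ⊢
        omega
    case _ => rw [hge, g_odd' g hg0 hge hgo] at heq; omega
    case _ => rw [hge, g_odd' g hg0 hge hgo] at heq; omega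
    case _ =>
      rw [g_odd' g hg0 hge hgo, g_odd' g hg0 hge hgo] at heq
      obtain ⟨b₁, hb' | hb'⟩ := Nat.even_or_odd' b <;>
        obtain ⟨d₁, hd | hd⟩ := Nat.even_or_odd' d <;> subst hb' <;> subst hd
      case _ =>
        rw [hge, hge] at heq
        have hb₁ : Odd (b₁ / Q) := by
          have : 2 * b₁ / (2 * Q) = b₁ / Q := by
            rw [← Nat.div_div_eq_div_mul, Nat.mul_div_cancel_left _ (by norm_num : 0 < 2)]
          rwa [this] at hb
        have heq2 : 2 * g c₁ + 4 * g d₁ = 2 * g a₁ + 4 * g b₁ + 4 * K := by omega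
        have hP := IH a₁ b₁ c₁ d₁ hb₁ heq2
        rw [hpow2]
        unfold prec at hP ⊢
        omega
      · rw [hge, g_odd' g hg0 hge hgo] at heq; omega
      · rw [g_odd' g hg0 hge hgo, hge] at heq; omega
      case _ =>
        rw [g_odd' g hg0 hge hgo, g_odd' g hg0 hge hgo] at heq
        have hb₁ : Odd (b₁ / Q) := by
          have : (2 * b₁ + 1) / (2 * Q) = b₁ / Q := by
            rw [← Nat.div_div_eq_div_mul]
            congr 1
            omega
          rwa [this] at hb
        have heq2 : 2 * g c₁ + 4 * g d₁ = 2 * g a₁ + 4 * g b₁ + 4 * K := by omega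
        have hP := IH a₁ b₁ c₁ d₁ hb₁ heq2
        rw [hpow2]
        unfold prec at hP ⊢
        omega

end aux

theorem stmt_7 (g : ℕ → ℕ) (hg0 : g 0 = 0)
    (hge : ∀ n, g (2 * n) = 4 * g n)
    (hgo : ∀ n, g (2 * n + 1) = g (2 * n) + 1)
    (q : ℕ) (hq : ∃ e : ℕ, q = 2 ^ e)
    (a b : ℕ) (hb : Odd (b / q))
    (c d : ℕ) (hcd : 1 + 2 * g c + 4 * g d = (1 + 2 * g a + 4 * g b) + 4 * q ^ 2) :
    prec c d a (b + q) := by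
  obtain ⟨e, rfl⟩ := hq
  have hq2 : ((2:ℕ) ^ e) ^ 2 = 4 ^ e := by
    rw [← pow_mul, mul_comm, pow_mul]; norm_num
  rw [hq2] at hcd
  apply lemM g hg0 hge hgo e a b c d hb
  obtain ⟨K, hK⟩ : ∃ K, (4:ℕ) ^ e = K := ⟨_, rfl⟩
  rw [hK] at hcd ⊢
  omega
end

section
/- Define a partial strict order ≺ on pairs by (c,d) ≺ (a,b) iff c+d < a+b, or c+d = a+b and d < b. Let q be a power of 2 and n = 1 + 2g(a) + 4g(b). Let (c,d) be the unique pair with 1 + 2g(c) + 4g(d) = n + 2q². Then (c,d) = (a+q, b) or (c,d) ≺ (a+q, b). Similarly, if (c',d') is the unique pair with 1 + 2g(c') + 4g(d') = n + 4q², then (c',d') = (a, b+q) or (c',d') ≺ (a, b+q). -/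
section Aux

variable (g : ℕ → ℕ) (hg0 : g 0 = 0)
    (hge : ∀ n, g (2 * n) = 4 * g n)
    (hgo : ∀ n, g (2 * n + 1) = g (2 * n) + 1)

include hg0 hge hgo

lemma gdiv (n : ℕ) : g n = 4 * g (n / 2) + n % 2 := by
  rcases Nat.even_or_odd n with ⟨m, hm⟩ | ⟨m, hm⟩
  · have h1 : n / 2 = m := by omega
    have h2 : n % 2 = 0 := by omega
    rw [h1, h2, show n = 2 * m by omega, hge]; omega
  · have h1 : n / 2 = m := by omega
    have h2 : n % 2 = 1 := by omega
    rw [h1, h2, show n = 2 * m + 1 by omega, hgo, hge]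

lemma gzero : ∀ n, g n = 0 → n = 0 := by
  intro n
  induction n using Nat.strong_induction_on with
  | _ n ih =>
    intro h
    rcases Nat.even_or_odd n with ⟨m, hm⟩ | ⟨m, hm⟩
    · rcases Nat.eq_zero_or_pos n with h0 | h0
      · exact h0
      · have hm' : n = 2 * m := by omega
        rw [hm', hge] at h
        have : m = 0 := ih m (by omega) (by omega)
        omega
    · rw [show n = 2 * m + 1 by omega, hgo] at h
      omega

lemma vinj : ∀ N a b c d : ℕ, a + b ≤ N → g c + 2 * g d = g a + 2 * g b →
    c = a ∧ d = b := by
  intro N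
  induction N with
  | zero =>
    intro a b c d hab h
    have ha : a = 0 := by omega
    have hb : b = 0 := by omega
    subst ha; subst hb
    rw [hg0] at h
    have hc : g c = 0 := by omega
    have hd : g d = 0 := by omega
    exact ⟨gzero g hg0 hge hgo c hc, gzero g hg0 hge hgo d hd⟩
  | succ N ih =>
    intro a b c d hab h
    rw [gdiv g hg0 hge hgo a, gdiv g hg0 hge hgo b, gdiv g hg0 hge hgo c,
      gdiv g hg0 hge hgo d] at h
    have key : c % 2 = a % 2 ∧ d % 2 = b % 2 ∧
        g (c / 2) + 2 * g (d / 2) = g (a / 2) + 2 * g (b / 2) := by omega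
    have H := ih (a / 2) (b / 2) (c / 2) (d / 2) (by omega) key.2.2
    omega

lemma q0 : ∀ a b c d : ℕ, g c + 2 * g d = g a + 2 * g b + 1 →
    (c = a + 1 ∧ d = b) ∨ prec c d (a + 1) b := by
  intro a
  induction a using Nat.strong_induction_on with
  | _ a ih =>
    intro b c d h
    rw [gdiv g hg0 hge hgo a, gdiv g hg0 hge hgo b, gdiv g hg0 hge hgo c,
      gdiv g hg0 hge hgo d] at h
    rcases Nat.eq_zero_or_pos (a % 2) with ha | ha
    · -- a even : no carry
      have key : c % 2 = 1 ∧ d % 2 = b % 2 ∧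
          g (c / 2) + 2 * g (d / 2) = g (a / 2) + 2 * g (b / 2) := by omega
      have H := vinj g hg0 hge hgo (a / 2 + b / 2) (a / 2) (b / 2) (c / 2) (d / 2)
        le_rfl key.2.2
      left; omega
    · have ha' : a % 2 = 1 := by omega
      rcases Nat.eq_zero_or_pos (b % 2) with hb | hb
      · -- a odd, b even : one carry, stops
        have key : c % 2 = 0 ∧ d % 2 = 1 ∧
            g (c / 2) + 2 * g (d / 2) = g (a / 2) + 2 * g (b / 2) := by omega
        have H := vinj g hg0 hge hgo (a / 2 + b / 2) (a / 2) (b / 2) (c / 2) (d / 2)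
          le_rfl key.2.2
        right; unfold prec; omega
      · -- a odd, b odd : carry propagates
        have hb' : b % 2 = 1 := by omega
        have key : c % 2 = 0 ∧ d % 2 = 0 ∧
            g (c / 2) + 2 * g (d / 2) = g (a / 2) + 2 * g (b / 2) + 1 := by omega
        have H := ih (a / 2) (by omega) (b / 2) (c / 2) (d / 2) key.2.2
        right; unfold prec at H ⊢; omega

lemma qe : ∀ e a b c d : ℕ, g c + 2 * g d = g a + 2 * g b + 4 ^ e →
    (c = a + 2 ^ e ∧ d = b) ∨ prec c d (a + 2 ^ e) b := by
  intro e
  induction e with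
  | zero => simpa using q0 g hg0 hge hgo
  | succ e ih =>
    intro a b c d h
    rw [gdiv g hg0 hge hgo a, gdiv g hg0 hge hgo b, gdiv g hg0 hge hgo c,
      gdiv g hg0 hge hgo d] at h
    have h4 : (4 : ℕ) ^ (e + 1) = 4 * 4 ^ e := by ring
    have h2 : (2 : ℕ) ^ (e + 1) = 2 * 2 ^ e := by ring
    rw [h4] at h
    have key : c % 2 = a % 2 ∧ d % 2 = b % 2 ∧
        g (c / 2) + 2 * g (d / 2) = g (a / 2) + 2 * g (b / 2) + 4 ^ e := by omega
    have H := ih (a / 2) (b / 2) (c / 2) (d / 2) key.2.2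
    unfold prec at H ⊢
    omega

lemma qe2 : ∀ e a b c d : ℕ, g c + 2 * g d = g a + 2 * g b + 2 * 4 ^ e →
    (c = a ∧ d = b + 2 ^ e) ∨ prec c d a (b + 2 ^ e) := by
  intro e
  induction e with
  | zero =>
    intro a b c d h
    simp only [pow_zero] at h ⊢
    rw [gdiv g hg0 hge hgo a, gdiv g hg0 hge hgo b, gdiv g hg0 hge hgo c,
      gdiv g hg0 hge hgo d] at h
    rcases Nat.eq_zero_or_pos (b % 2) with hb | hb
    · -- b even : no carry
      have key : c % 2 = a % 2 ∧ d % 2 = 1 ∧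
          g (c / 2) + 2 * g (d / 2) = g (a / 2) + 2 * g (b / 2) := by omega
      have H := vinj g hg0 hge hgo (a / 2 + b / 2) (a / 2) (b / 2) (c / 2) (d / 2)
        le_rfl key.2.2
      left; omega
    · -- b odd : carry into the other coordinate
      have hb' : b % 2 = 1 := by omega
      have key : c % 2 = a % 2 ∧ d % 2 = 0 ∧
          g (c / 2) + 2 * g (d / 2) = g (a / 2) + 2 * g (b / 2) + 1 := by omega
      have H := q0 g hg0 hge hgo (a / 2) (b / 2) (c / 2) (d / 2) key.2.2
      right; unfold prec at H ⊢; omega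
  | succ e ih =>
    intro a b c d h
    rw [gdiv g hg0 hge hgo a, gdiv g hg0 hge hgo b, gdiv g hg0 hge hgo c,
      gdiv g hg0 hge hgo d] at h
    have h4 : 2 * (4 : ℕ) ^ (e + 1) = 4 * (2 * 4 ^ e) := by ring
    have h2 : (2 : ℕ) ^ (e + 1) = 2 * 2 ^ e := by ring
    rw [h4] at h
    have key : c % 2 = a % 2 ∧ d % 2 = b % 2 ∧
        g (c / 2) + 2 * g (d / 2) = g (a / 2) + 2 * g (b / 2) + 2 * 4 ^ e := by omega
    have H := ih (a / 2) (b / 2) (c / 2) (d / 2) key.2.2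
    unfold prec at H ⊢
    omega

end Aux

theorem stmt_8 (g : ℕ → ℕ) (hg0 : g 0 = 0)
    (hge : ∀ n, g (2 * n) = 4 * g n)
    (hgo : ∀ n, g (2 * n + 1) = g (2 * n) + 1)
    (q : ℕ) (hq : ∃ e : ℕ, q = 2 ^ e) (a b : ℕ) :
    (∀ c d : ℕ, 1 + 2 * g c + 4 * g d = (1 + 2 * g a + 4 * g b) + 2 * q ^ 2 →
      (c, d) = (a + q, b) ∨ prec c d (a + q) b) ∧
    (∀ c' d' : ℕ, 1 + 2 * g c' + 4 * g d' = (1 + 2 * g a + 4 * g b) + 4 * q ^ 2 →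
      (c', d') = (a, b + q) ∨ prec c' d' a (b + q)) := by
  obtain ⟨e, rfl⟩ := hq
  have hq2 : ((2 : ℕ) ^ e) ^ 2 = 4 ^ e := by
    rw [show (4 : ℕ) = 2 ^ 2 by norm_num, ← pow_mul, ← pow_mul, Nat.mul_comm]
  constructor
  · intro c d h
    rw [hq2] at h
    have h' : g c + 2 * g d = g a + 2 * g b + 4 ^ e := by omega
    rcases qe g hg0 hge hgo e a b c d h' with ⟨h1, h2⟩ | H
    · left; rw [h1, h2]
    · right; exact H
  · intro c d h
    rw [hq2] at h
    have h' : g c + 2 * g d = g a + 2 * g b + 2 * 4 ^ e := by omega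
    rcases qe2 g hg0 hge hgo e a b c d h' with ⟨h1, h2⟩ | H
    · left; rw [h1, h2]
    · right; exact H
end

section
/- Let r be a power of 2 and suppose for every odd n > 0 we are given A_n ∈ t·(ℤ/2)[t²] satisfying A_{n+8r} = t^{8r}·A_n + t^{2r}·A_{n+2r}. Suppose further that whenever n < 8r², A_n is a sum of monomials t^m (m odd) such that the code (c,d) of each t^m precedes the code (a,b) of t^n in the order: (c,d) precedes (a,b) iff c+d < a+b, or c+d = a+b and d < b. Then this property holds for all odd n > 0. -/
open Polynomial

namespace NSAux

def C : ℕ → ℕ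
  | x =>
    if h : x = 0 then 0
    else x % 4 % 2 + 2 * C (x / 4)
decreasing_by exact Nat.div_lt_self (Nat.pos_of_ne_zero h) (by norm_num)

def D : ℕ → ℕ
  | x =>
    if h : x = 0 then 0
    else x % 4 / 2 + 2 * D (x / 4)
decreasing_by exact Nat.div_lt_self (Nat.pos_of_ne_zero h) (by norm_num)

def G : ℕ → ℕ
  | n =>
    if h : n = 0 then 0
    else 4 * G (n / 2) + n % 2
decreasing_by exact Nat.div_lt_self (Nat.pos_of_ne_zero h) (by norm_num)

lemma C_zero : C 0 = 0 := by rw [C]; rfl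
lemma D_zero : D 0 = 0 := by rw [D]; rfl
lemma G_zero : G 0 = 0 := by rw [G]; rfl

lemma C_step (x : ℕ) : C x = x % 4 % 2 + 2 * C (x / 4) := by
  rw [C]; split
  · next h => subst h; simp [C_zero]
  · rfl

lemma D_step (x : ℕ) : D x = x % 4 / 2 + 2 * D (x / 4) := by
  rw [D]; split
  · next h => subst h; simp [D_zero]
  · rfl

lemma G_step (n : ℕ) : G n = 4 * G (n / 2) + n % 2 := by
  rw [G]; split
  · next h => subst h; simp [G_zero]
  · rfl

lemma decode (x : ℕ) : G (C x) + 2 * G (D x) = x := by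
  induction x using Nat.strong_induction_on with
  | _ x ih =>
    rcases Nat.eq_zero_or_pos x with h0 | hp
    · subst h0; simp [C_zero, D_zero, G_zero]
    · have hC := C_step x
      have hD := D_step x
      have e1 : G (C x) = 4 * G (C (x / 4)) + x % 4 % 2 := by
        rw [hC, G_step]
        have h1 : (x % 4 % 2 + 2 * C (x / 4)) / 2 = C (x / 4) := by omega
        have h2 : (x % 4 % 2 + 2 * C (x / 4)) % 2 = x % 4 % 2 := by omega
        rw [h1, h2]
      have e2 : G (D x) = 4 * G (D (x / 4)) + x % 4 / 2 := by
        rw [hD, G_step]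
        have h1 : (x % 4 / 2 + 2 * D (x / 4)) / 2 = D (x / 4) := by omega
        have h2 : (x % 4 / 2 + 2 * D (x / 4)) % 2 = x % 4 / 2 := by omega
        rw [h1, h2]
      have ih' := ih (x / 4) (Nat.div_lt_self hp (by norm_num))
      omega

lemma encode : ∀ N c d, c + d ≤ N → C (G c + 2 * G d) = c ∧ D (G c + 2 * G d) = d := by
  intro N
  induction N with
  | zero =>
    intro c d h
    have hc : c = 0 := by omega
    have hd : d = 0 := by omega
    subst hc; subst hd
    simp [G_zero, C_zero, D_zero]
  | succ N ihN =>
    intro c d h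
    rcases Nat.eq_zero_or_pos (c + d) with h0 | hp
    · have hc : c = 0 := by omega
      have hd : d = 0 := by omega
      subst hc; subst hd
      simp [G_zero, C_zero, D_zero]
    · have hgc := G_step c
      have hgd := G_step d
      have ih' := ihN (c / 2) (d / 2) (by omega)
      have hx4 : (G c + 2 * G d) / 4 = G (c / 2) + 2 * G (d / 2) := by omega
      have hxm : (G c + 2 * G d) % 4 = c % 2 + 2 * (d % 2) := by omega
      constructor
      · rw [C_step, hx4, hxm, ih'.1]; omega
      · rw [D_step, hx4, hxm, ih'.2]; omega

lemma C_val (x q : ℕ) (h : q < 4) : C (4 * x + q) = q % 2 + 2 * C x := by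
  rw [C_step]
  have h1 : (4 * x + q) % 4 = q := by omega
  have h2 : (4 * x + q) / 4 = x := by omega
  rw [h1, h2]

lemma D_val (x q : ℕ) (h : q < 4) : D (4 * x + q) = q / 2 + 2 * D x := by
  rw [D_step]
  have h1 : (4 * x + q) % 4 = q := by omega
  have h2 : (4 * x + q) / 4 = x := by omega
  rw [h1, h2]

lemma C1 : C 1 = 1 := by have h := C_val 0 1 (by norm_num); simpa [C_zero] using h
lemma C2 : C 2 = 0 := by have h := C_val 0 2 (by norm_num); simpa [C_zero] using h
lemma C3 : C 3 = 1 := by have h := C_val 0 3 (by norm_num); simpa [C_zero] using h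
lemma C4 : C 4 = 2 := by have h := C_val 1 0 (by norm_num); simpa [C1] using h
lemma C5 : C 5 = 3 := by have h := C_val 1 1 (by norm_num); simpa [C1] using h
lemma C6 : C 6 = 2 := by have h := C_val 1 2 (by norm_num); simpa [C1] using h
lemma C7 : C 7 = 3 := by have h := C_val 1 3 (by norm_num); simpa [C1] using h
lemma C8 : C 8 = 0 := by have h := C_val 2 0 (by norm_num); simpa [C2] using h
lemma C9 : C 9 = 1 := by have h := C_val 2 1 (by norm_num); simpa [C2] using h
lemma C10 : C 10 = 0 := by have h := C_val 2 2 (by norm_num); simpa [C2] using h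
lemma C11 : C 11 = 1 := by have h := C_val 2 3 (by norm_num); simpa [C2] using h
lemma C12 : C 12 = 2 := by have h := C_val 3 0 (by norm_num); simpa [C3] using h
lemma C13 : C 13 = 3 := by have h := C_val 3 1 (by norm_num); simpa [C3] using h
lemma C14 : C 14 = 2 := by have h := C_val 3 2 (by norm_num); simpa [C3] using h
lemma C15 : C 15 = 3 := by have h := C_val 3 3 (by norm_num); simpa [C3] using h

lemma D1 : D 1 = 0 := by have h := D_val 0 1 (by norm_num); simpa [D_zero] using h
lemma D2 : D 2 = 1 := by have h := D_val 0 2 (by norm_num); simpa [D_zero] using h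
lemma D3 : D 3 = 1 := by have h := D_val 0 3 (by norm_num); simpa [D_zero] using h
lemma D4 : D 4 = 0 := by have h := D_val 1 0 (by norm_num); simpa [D1] using h
lemma D5 : D 5 = 0 := by have h := D_val 1 1 (by norm_num); simpa [D1] using h
lemma D6 : D 6 = 1 := by have h := D_val 1 2 (by norm_num); simpa [D1] using h
lemma D7 : D 7 = 1 := by have h := D_val 1 3 (by norm_num); simpa [D1] using h
lemma D8 : D 8 = 2 := by have h := D_val 2 0 (by norm_num); simpa [D2] using h
lemma D9 : D 9 = 2 := by have h := D_val 2 1 (by norm_num); simpa [D2] using h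
lemma D10 : D 10 = 3 := by have h := D_val 2 2 (by norm_num); simpa [D2] using h
lemma D11 : D 11 = 3 := by have h := D_val 2 3 (by norm_num); simpa [D2] using h
lemma D12 : D 12 = 2 := by have h := D_val 3 0 (by norm_num); simpa [D3] using h
lemma D13 : D 13 = 2 := by have h := D_val 3 1 (by norm_num); simpa [D3] using h
lemma D14 : D 14 = 3 := by have h := D_val 3 2 (by norm_num); simpa [D3] using h
lemma D15 : D 15 = 3 := by have h := D_val 3 3 (by norm_num); simpa [D3] using h

lemma split : ∀ j P w, w < 4 ^ j →
    C (P * 4 ^ j + w) = C P * 2 ^ j + C w ∧ D (P * 4 ^ j + w) = D P * 2 ^ j + D w := by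
  intro j
  induction j with
  | zero =>
    intro P w hw
    have : w = 0 := by omega
    subst this
    simp [C_zero, D_zero]
  | succ j ih =>
    intro P w hw
    have h4 : (4:ℕ) ^ (j+1) = 4 ^ j * 4 := by rw [pow_succ]
    have hx : P * 4 ^ (j+1) + w = (P * 4 ^ j + w / 4) * 4 + w % 4 := by
      rw [h4]; have := Nat.div_add_mod w 4; ring_nf; omega
    have hw4 : w / 4 < 4 ^ j := by omega
    obtain ⟨ihC, ihD⟩ := ih P (w / 4) hw4
    have hm4 : (P * 4 ^ (j+1) + w) % 4 = w % 4 := by omega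
    have hd4 : (P * 4 ^ (j+1) + w) / 4 = P * 4 ^ j + w / 4 := by omega
    have hCw := C_step w
    have hDw := D_step w
    constructor
    · rw [C_step, hm4, hd4, ihC, hCw, pow_succ]; ring
    · rw [D_step, hm4, hd4, ihD, hDw, pow_succ]; ring

lemma bound : ∀ j w, w < 4 ^ j → C w < 2 ^ j ∧ D w < 2 ^ j := by
  intro j
  induction j with
  | zero =>
    intro w hw
    have : w = 0 := by omega
    subst this; simp [C_zero, D_zero]
  | succ j ih =>
    intro w hw
    have h4 : (4:ℕ) ^ (j+1) = 4 ^ j * 4 := by rw [pow_succ]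
    have h2 : (2:ℕ) ^ (j+1) = 2 ^ j * 2 := by rw [pow_succ]
    obtain ⟨ih1, ih2⟩ := ih (w / 4) (by omega)
    have hCw := C_step w
    have hDw := D_step w
    omega

lemma Add1 : ∀ P, C (P + 1) + D (P + 1) ≤ C P + D P + 1 ∧
    (C (P + 1) + D (P + 1) = C P + D P + 1 → D (P + 1) ≤ D P + 0) := by
  intro P
  induction P using Nat.strong_induction_on with
  | _ P ih =>
    have hCP := C_step P
    have hDP := D_step P
    have hCP1 := C_step (P + 1)
    have hDP1 := D_step (P + 1)
    rcases Nat.lt_or_ge (P % 4) 3 with hq | hq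
    · have h14 : (P + 1) / 4 = P / 4 := by omega
      rw [h14] at hCP1 hDP1
      omega
    · have h14 : (P + 1) / 4 = P / 4 + 1 := by omega
      rw [h14] at hCP1 hDP1
      have ih' := ih (P / 4) (by omega)
      omega

lemma Add2 : ∀ P, C (P + 2) + D (P + 2) ≤ C P + D P + 1 ∧
    (C (P + 2) + D (P + 2) = C P + D P + 1 → D (P + 2) ≤ D P + 1) := by
  intro P
  have hCP := C_step P
  have hDP := D_step P
  have hCP2 := C_step (P + 2)
  have hDP2 := D_step (P + 2)
  rcases Nat.lt_or_ge (P % 4) 2 with hq | hq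
  · have h14 : (P + 2) / 4 = P / 4 := by omega
    rw [h14] at hCP2 hDP2
    omega
  · have h14 : (P + 2) / 4 = P / 4 + 1 := by omega
    rw [h14] at hCP2 hDP2
    have h' := Add1 (P / 4)
    omega



lemma mainShift (b j x y xn : ℕ)
    (hadd : ∀ Q : ℕ, C (Q + (b+1)) + D (Q + (b+1)) ≤ C Q + D Q + 1 ∧
      (C (Q + (b+1)) + D (Q + (b+1)) = C Q + D Q + 1 → D (Q + (b+1)) ≤ D Q + b))
    (hS : C y + D y + 2 ^ j ≤ C xn + D xn)
    (hD : C xn + D xn = C y + D y + 2 ^ j → D y + b * 2 ^ j ≤ D xn)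
    (h : prec (C x) (D x) (C y) (D y)) :
    prec (C (x + (b+1) * 4 ^ j)) (D (x + (b+1) * 4 ^ j)) (C xn) (D xn) := by
  have hF : 0 < (4:ℕ) ^ j := pow_pos (by norm_num) j
  have hE : 0 < (2:ℕ) ^ j := pow_pos (by norm_num) j
  obtain ⟨P, w, hw, hx⟩ : ∃ P w, w < 4 ^ j ∧ x = P * 4 ^ j + w :=
    ⟨x / 4 ^ j, x % 4 ^ j, Nat.mod_lt _ hF, by
      rw [mul_comm]; exact (Nat.div_add_mod x (4 ^ j)).symm⟩
  have hx2 : x + (b+1) * 4 ^ j = (P + (b+1)) * 4 ^ j + w := by rw [hx]; ring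
  obtain ⟨hCx, hDx⟩ := split j P w hw
  obtain ⟨hCx2, hDx2⟩ := split j (P + (b+1)) w hw
  rw [hx, hCx, hDx] at h
  rw [hx2, hCx2, hDx2]
  obtain ⟨h1, h2⟩ := hadd P
  by_cases hc : C (P + (b+1)) + D (P + (b+1)) = C P + D P + 1
  · have E1 : C (P + (b+1)) * 2 ^ j + D (P + (b+1)) * 2 ^ j
        = C P * 2 ^ j + D P * 2 ^ j + 2 ^ j := by
      calc C (P + (b+1)) * 2 ^ j + D (P + (b+1)) * 2 ^ j
          = (C (P + (b+1)) + D (P + (b+1))) * 2 ^ j := by ring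
        _ = (C P + D P + 1) * 2 ^ j := by rw [hc]
        _ = C P * 2 ^ j + D P * 2 ^ j + 2 ^ j := by ring
    have E2 := h2 hc
    have E3 : D (P + (b+1)) * 2 ^ j ≤ D P * 2 ^ j + b * 2 ^ j := by
      calc D (P + (b+1)) * 2 ^ j ≤ (D P + b) * 2 ^ j := Nat.mul_le_mul_right _ E2
        _ = D P * 2 ^ j + b * 2 ^ j := by ring
    by_cases hxeq : C xn + D xn = C y + D y + 2 ^ j
    · have hd := hD hxeq
      unfold prec at h ⊢
      omega
    · unfold prec at h ⊢
      omega
  · have hc' : C (P + (b+1)) + D (P + (b+1)) ≤ C P + D P := by omega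
    have M : C (P + (b+1)) * 2 ^ j + D (P + (b+1)) * 2 ^ j
        ≤ C P * 2 ^ j + D P * 2 ^ j := by
      calc C (P + (b+1)) * 2 ^ j + D (P + (b+1)) * 2 ^ j
          = (C (P + (b+1)) + D (P + (b+1))) * 2 ^ j := by ring
        _ ≤ (C P + D P) * 2 ^ j := Nat.mul_le_mul_right _ hc'
        _ = C P * 2 ^ j + D P * 2 ^ j := by ring
    unfold prec at h ⊢
    omega

lemma pow2_even (k : ℕ) : (2:ℕ) ^ (2 * k) = 4 ^ k := by
  rw [pow_mul]; norm_num

lemma hadd1 : ∀ Q : ℕ, C (Q + (0+1)) + D (Q + (0+1)) ≤ C Q + D Q + 1 ∧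
    (C (Q + (0+1)) + D (Q + (0+1)) = C Q + D Q + 1 → D (Q + (0+1)) ≤ D Q + 0) := by
  intro Q; simpa using Add1 Q

lemma hadd2 : ∀ Q : ℕ, C (Q + (1+1)) + D (Q + (1+1)) ≤ C Q + D Q + 1 ∧
    (C (Q + (1+1)) + D (Q + (1+1)) = C Q + D Q + 1 → D (Q + (1+1)) ≤ D Q + 1) := by
  intro Q; simpa using Add2 Q

lemma keyShift1 (t xn x : ℕ) (hl : 2 ^ (t+2) ≤ xn) (hu : xn < 2 ^ (t+3))
    (h : prec (C x) (D x) (C (xn - 2 ^ (t+2))) (D (xn - 2 ^ (t+2)))) :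
    prec (C (x + 2 ^ (t+2))) (D (x + 2 ^ (t+2))) (C xn) (D xn) := by
  rcases Nat.even_or_odd t with ⟨u, hu2⟩ | ⟨u, hu2⟩
  · -- t = u + u
    have e2 : (2:ℕ) ^ (t+2) = 4 ^ (u+1) := by
      rw [← pow2_even (u+1)]; congr 1; omega
    have e3 : (2:ℕ) ^ (t+3) = 2 * 4 ^ (u+1) := by
      have : t + 3 = (t + 2) + 1 := by omega
      rw [this, pow_succ, e2]; ring
    have hF : 0 < (4:ℕ) ^ (u+1) := pow_pos (by norm_num) _
    rw [e2] at hl h ⊢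
    rw [e3] at hu
    have hz : xn - 4 ^ (u+1) < 4 ^ (u+1) := by omega
    have hxn : xn = 1 * 4 ^ (u+1) + (xn - 4 ^ (u+1)) := by omega
    obtain ⟨hC1, hD1⟩ := split (u+1) 1 (xn - 4 ^ (u+1)) hz
    rw [← hxn] at hC1 hD1
    rw [C1] at hC1
    rw [D1] at hD1
    have hgoal := mainShift 0 (u+1) x (xn - 4 ^ (u+1)) xn hadd1
      (by rw [hC1, hD1]; omega)
      (by rw [hD1]; omega)
      h
    have : x + (0+1) * 4 ^ (u+1) = x + 4 ^ (u+1) := by ring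
    rwa [this] at hgoal
  · -- t = 2u + 1
    have e2 : (2:ℕ) ^ (t+2) = 2 * 4 ^ (u+1) := by
      have h1 : t + 2 = 2 * (u+1) + 1 := by omega
      rw [h1, pow_succ, pow2_even]; ring
    have e3 : (2:ℕ) ^ (t+3) = 4 * 4 ^ (u+1) := by
      have h1 : t + 3 = 2 * (u+2) := by omega
      rw [h1, pow2_even, pow_succ]; ring
    have hF : 0 < (4:ℕ) ^ (u+1) := pow_pos (by norm_num) _
    rw [e2] at hl h ⊢
    rw [e3] at hu
    have hT1 : 2 ≤ xn / 4 ^ (u+1) := (Nat.le_div_iff_mul_le hF).2 (by omega)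
    have hT2 : xn / 4 ^ (u+1) < 4 := (Nat.div_lt_iff_lt_mul hF).2 (by omega)
    obtain ⟨T, z, h2T, hT4, hz, hxn⟩ :
        ∃ T z, 2 ≤ T ∧ T < 4 ∧ z < 4 ^ (u+1) ∧ xn = T * 4 ^ (u+1) + z :=
      ⟨xn / 4 ^ (u+1), xn % 4 ^ (u+1), hT1, hT2, Nat.mod_lt _ hF, by
        rw [mul_comm]; exact (Nat.div_add_mod xn (4 ^ (u+1))).symm⟩
    interval_cases T
    · -- T = 2
      have hy : xn - 2 * 4 ^ (u+1) = z := by omega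
      obtain ⟨hCn, hDn⟩ := split (u+1) 2 z hz
      rw [← hxn] at hCn hDn
      rw [C2] at hCn
      rw [D2] at hDn
      rw [hy] at h
      have hgoal := mainShift 1 (u+1) x z xn hadd2
        (by rw [hCn, hDn]; omega)
        (by rw [hCn, hDn]; omega)
        h
      have : x + (1+1) * 4 ^ (u+1) = x + 2 * 4 ^ (u+1) := by ring
      rwa [this] at hgoal
    · -- T = 3
      have hy : xn - 2 * 4 ^ (u+1) = 1 * 4 ^ (u+1) + z := by omega
      obtain ⟨hCn, hDn⟩ := split (u+1) 3 z hz
      rw [← hxn] at hCn hDn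
      rw [C3] at hCn
      rw [D3] at hDn
      obtain ⟨hCy, hDy⟩ := split (u+1) 1 z hz
      rw [← hy] at hCy hDy
      rw [C1] at hCy
      rw [D1] at hDy
      have hgoal := mainShift 1 (u+1) x (xn - 2 * 4 ^ (u+1)) xn hadd2
        (by rw [hCn, hDn, hCy, hDy]; omega)
        (by rw [hDn, hDy]; omega)
        h
      have : x + (1+1) * 4 ^ (u+1) = x + 2 * 4 ^ (u+1) := by ring
      rwa [this] at hgoal


lemma keyShift2 (t xn x : ℕ) (hl : 2 ^ (t+2) ≤ xn) (hu : xn < 2 ^ (t+3))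
    (h : prec (C x) (D x) (C (xn - 3 * 2 ^ t)) (D (xn - 3 * 2 ^ t))) :
    prec (C (x + 2 ^ t)) (D (x + 2 ^ t)) (C xn) (D xn) := by
  rcases Nat.even_or_odd t with ⟨u, hu2⟩ | ⟨u, hu2⟩
  · -- t = u + u : 2^t = 4^u, xn ∈ [4*4^u, 8*4^u)
    have e1 : (2:ℕ) ^ t = 4 ^ u := by rw [← pow2_even u]; congr 1; omega
    have e2 : (2:ℕ) ^ (t+2) = 4 * 4 ^ u := by
      have h1 : t + 2 = 2 * (u+1) := by omega
      rw [h1, pow2_even, pow_succ]; ring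
    have e3 : (2:ℕ) ^ (t+3) = 8 * 4 ^ u := by
      have h1 : t + 3 = 2 * (u+1) + 1 := by omega
      rw [h1, pow_succ, pow2_even, pow_succ]; ring
    have hF : 0 < (4:ℕ) ^ u := pow_pos (by norm_num) _
    rw [e2] at hl
    rw [e3] at hu
    rw [e1] at h ⊢
    have hT1 : 4 ≤ xn / 4 ^ u := (Nat.le_div_iff_mul_le hF).2 (by omega)
    have hT2 : xn / 4 ^ u < 8 := (Nat.div_lt_iff_lt_mul hF).2 (by omega)
    obtain ⟨T, w, h4T, hT8, hw, hxn⟩ :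
        ∃ T w, 4 ≤ T ∧ T < 8 ∧ w < 4 ^ u ∧ xn = T * 4 ^ u + w :=
      ⟨xn / 4 ^ u, xn % 4 ^ u, hT1, hT2, Nat.mod_lt _ hF, by
        rw [mul_comm]; exact (Nat.div_add_mod xn (4 ^ u)).symm⟩
    interval_cases T
    · -- T = 4
      have hy : xn - 3 * 4 ^ u = 1 * 4 ^ u + w := by omega
      obtain ⟨hCn, hDn⟩ := split u 4 w hw
      rw [← hxn] at hCn hDn
      rw [C4] at hCn
      rw [D4] at hDn
      obtain ⟨hCy, hDy⟩ := split u 1 w hw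
      rw [← hy] at hCy hDy
      rw [C1] at hCy
      rw [D1] at hDy
      have hgoal := mainShift 0 u x (xn - 3 * 4 ^ u) xn hadd1
        (by rw [hCn, hDn, hCy, hDy]; omega)
        (by rw [hCn, hDn, hDy]; omega)
        h
      have heq : x + (0+1) * 4 ^ u = x + 4 ^ u := by ring
      rwa [heq] at hgoal
    · -- T = 5
      have hy : xn - 3 * 4 ^ u = 2 * 4 ^ u + w := by omega
      obtain ⟨hCn, hDn⟩ := split u 5 w hw
      rw [← hxn] at hCn hDn
      rw [C5] at hCn
      rw [D5] at hDn
      obtain ⟨hCy, hDy⟩ := split u 2 w hw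
      rw [← hy] at hCy hDy
      rw [C2] at hCy
      rw [D2] at hDy
      have hgoal := mainShift 0 u x (xn - 3 * 4 ^ u) xn hadd1
        (by rw [hCn, hDn, hCy, hDy]; omega)
        (by rw [hCn, hDn, hDy]; omega)
        h
      have heq : x + (0+1) * 4 ^ u = x + 4 ^ u := by ring
      rwa [heq] at hgoal
    · -- T = 6
      have hy : xn - 3 * 4 ^ u = 3 * 4 ^ u + w := by omega
      obtain ⟨hCn, hDn⟩ := split u 6 w hw
      rw [← hxn] at hCn hDn
      rw [C6] at hCn
      rw [D6] at hDn
      obtain ⟨hCy, hDy⟩ := split u 3 w hw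
      rw [← hy] at hCy hDy
      rw [C3] at hCy
      rw [D3] at hDy
      have hgoal := mainShift 0 u x (xn - 3 * 4 ^ u) xn hadd1
        (by rw [hCn, hDn, hCy, hDy]; omega)
        (by rw [hCn, hDn, hDy]; omega)
        h
      have heq : x + (0+1) * 4 ^ u = x + 4 ^ u := by ring
      rwa [heq] at hgoal
    · -- T = 7
      have hy : xn - 3 * 4 ^ u = 4 * 4 ^ u + w := by omega
      obtain ⟨hCn, hDn⟩ := split u 7 w hw
      rw [← hxn] at hCn hDn
      rw [C7] at hCn
      rw [D7] at hDn
      obtain ⟨hCy, hDy⟩ := split u 4 w hw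
      rw [← hy] at hCy hDy
      rw [C4] at hCy
      rw [D4] at hDy
      have hgoal := mainShift 0 u x (xn - 3 * 4 ^ u) xn hadd1
        (by rw [hCn, hDn, hCy, hDy]; omega)
        (by rw [hCn, hDn, hDy]; omega)
        h
      have heq : x + (0+1) * 4 ^ u = x + 4 ^ u := by ring
      rwa [heq] at hgoal
  · -- t = 2u+1 : 2^t = 2*4^u, xn ∈ [8*4^u, 16*4^u)
    have e1 : (2:ℕ) ^ t = 2 * 4 ^ u := by
      rw [hu2, pow_succ, pow2_even]; ring
    have e2 : (2:ℕ) ^ (t+2) = 8 * 4 ^ u := by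
      have h1 : t + 2 = 2 * (u+1) + 1 := by omega
      rw [h1, pow_succ, pow2_even, pow_succ]; ring
    have e3 : (2:ℕ) ^ (t+3) = 16 * 4 ^ u := by
      have h1 : t + 3 = 2 * (u+2) := by omega
      rw [h1, pow2_even, pow_succ, pow_succ]; ring
    have hF : 0 < (4:ℕ) ^ u := pow_pos (by norm_num) _
    rw [e2] at hl
    rw [e3] at hu
    rw [e1] at h ⊢
    have h6 : 3 * (2 * 4 ^ u) = 6 * 4 ^ u := by ring
    rw [h6] at h
    have hT1 : 8 ≤ xn / 4 ^ u := (Nat.le_div_iff_mul_le hF).2 (by omega)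
    have hT2 : xn / 4 ^ u < 16 := (Nat.div_lt_iff_lt_mul hF).2 (by omega)
    obtain ⟨T, w, h4T, hT8, hw, hxn⟩ :
        ∃ T w, 8 ≤ T ∧ T < 16 ∧ w < 4 ^ u ∧ xn = T * 4 ^ u + w :=
      ⟨xn / 4 ^ u, xn % 4 ^ u, hT1, hT2, Nat.mod_lt _ hF, by
        rw [mul_comm]; exact (Nat.div_add_mod xn (4 ^ u)).symm⟩
    interval_cases T
    · -- T = 8
      have hy : xn - 6 * 4 ^ u = 2 * 4 ^ u + w := by omega
      obtain ⟨hCn, hDn⟩ := split u 8 w hw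
      rw [← hxn] at hCn hDn
      rw [C8] at hCn
      rw [D8] at hDn
      obtain ⟨hCy, hDy⟩ := split u 2 w hw
      rw [← hy] at hCy hDy
      rw [C2] at hCy
      rw [D2] at hDy
      have hgoal := mainShift 1 u x (xn - 6 * 4 ^ u) xn hadd2
        (by rw [hCn, hDn, hCy, hDy]; omega)
        (by rw [hCn, hDn, hDy]; omega)
        h
      have heq : x + (1+1) * 4 ^ u = x + 2 * 4 ^ u := by ring
      rwa [heq] at hgoal
    · -- T = 9
      have hy : xn - 6 * 4 ^ u = 3 * 4 ^ u + w := by omega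
      obtain ⟨hCn, hDn⟩ := split u 9 w hw
      rw [← hxn] at hCn hDn
      rw [C9] at hCn
      rw [D9] at hDn
      obtain ⟨hCy, hDy⟩ := split u 3 w hw
      rw [← hy] at hCy hDy
      rw [C3] at hCy
      rw [D3] at hDy
      have hgoal := mainShift 1 u x (xn - 6 * 4 ^ u) xn hadd2
        (by rw [hCn, hDn, hCy, hDy]; omega)
        (by rw [hCn, hDn, hDy]; omega)
        h
      have heq : x + (1+1) * 4 ^ u = x + 2 * 4 ^ u := by ring
      rwa [heq] at hgoal
    · -- T = 10
      have hy : xn - 6 * 4 ^ u = 4 * 4 ^ u + w := by omega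
      obtain ⟨hCn, hDn⟩ := split u 10 w hw
      rw [← hxn] at hCn hDn
      rw [C10] at hCn
      rw [D10] at hDn
      obtain ⟨hCy, hDy⟩ := split u 4 w hw
      rw [← hy] at hCy hDy
      rw [C4] at hCy
      rw [D4] at hDy
      have hgoal := mainShift 1 u x (xn - 6 * 4 ^ u) xn hadd2
        (by rw [hCn, hDn, hCy, hDy]; omega)
        (by rw [hCn, hDn, hDy]; omega)
        h
      have heq : x + (1+1) * 4 ^ u = x + 2 * 4 ^ u := by ring
      rwa [heq] at hgoal
    · -- T = 11
      have hy : xn - 6 * 4 ^ u = 5 * 4 ^ u + w := by omega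
      obtain ⟨hCn, hDn⟩ := split u 11 w hw
      rw [← hxn] at hCn hDn
      rw [C11] at hCn
      rw [D11] at hDn
      obtain ⟨hCy, hDy⟩ := split u 5 w hw
      rw [← hy] at hCy hDy
      rw [C5] at hCy
      rw [D5] at hDy
      have hgoal := mainShift 1 u x (xn - 6 * 4 ^ u) xn hadd2
        (by rw [hCn, hDn, hCy, hDy]; omega)
        (by rw [hCn, hDn, hDy]; omega)
        h
      have heq : x + (1+1) * 4 ^ u = x + 2 * 4 ^ u := by ring
      rwa [heq] at hgoal
    · -- T = 12
      have hy : xn - 6 * 4 ^ u = 6 * 4 ^ u + w := by omega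
      obtain ⟨hCn, hDn⟩ := split u 12 w hw
      rw [← hxn] at hCn hDn
      rw [C12] at hCn
      rw [D12] at hDn
      obtain ⟨hCy, hDy⟩ := split u 6 w hw
      rw [← hy] at hCy hDy
      rw [C6] at hCy
      rw [D6] at hDy
      have hgoal := mainShift 1 u x (xn - 6 * 4 ^ u) xn hadd2
        (by rw [hCn, hDn, hCy, hDy]; omega)
        (by rw [hCn, hDn, hDy]; omega)
        h
      have heq : x + (1+1) * 4 ^ u = x + 2 * 4 ^ u := by ring
      rwa [heq] at hgoal
    · -- T = 13
      have hy : xn - 6 * 4 ^ u = 7 * 4 ^ u + w := by omega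
      obtain ⟨hCn, hDn⟩ := split u 13 w hw
      rw [← hxn] at hCn hDn
      rw [C13] at hCn
      rw [D13] at hDn
      obtain ⟨hCy, hDy⟩ := split u 7 w hw
      rw [← hy] at hCy hDy
      rw [C7] at hCy
      rw [D7] at hDy
      have hgoal := mainShift 1 u x (xn - 6 * 4 ^ u) xn hadd2
        (by rw [hCn, hDn, hCy, hDy]; omega)
        (by rw [hCn, hDn, hDy]; omega)
        h
      have heq : x + (1+1) * 4 ^ u = x + 2 * 4 ^ u := by ring
      rwa [heq] at hgoal
    · -- T = 14
      have hy : xn - 6 * 4 ^ u = 8 * 4 ^ u + w := by omega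
      obtain ⟨hCn, hDn⟩ := split u 14 w hw
      rw [← hxn] at hCn hDn
      rw [C14] at hCn
      rw [D14] at hDn
      obtain ⟨hCy, hDy⟩ := split u 8 w hw
      rw [← hy] at hCy hDy
      rw [C8] at hCy
      rw [D8] at hDy
      have hgoal := mainShift 1 u x (xn - 6 * 4 ^ u) xn hadd2
        (by rw [hCn, hDn, hCy, hDy]; omega)
        (by rw [hCn, hDn, hDy]; omega)
        h
      have heq : x + (1+1) * 4 ^ u = x + 2 * 4 ^ u := by ring
      rwa [heq] at hgoal
    · -- T = 15
      have hy : xn - 6 * 4 ^ u = 9 * 4 ^ u + w := by omega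
      obtain ⟨hCn, hDn⟩ := split u 15 w hw
      rw [← hxn] at hCn hDn
      rw [C15] at hCn
      rw [D15] at hDn
      obtain ⟨hCy, hDy⟩ := split u 9 w hw
      rw [← hy] at hCy hDy
      rw [C9] at hCy
      rw [D9] at hDy
      have hgoal := mainShift 1 u x (xn - 6 * 4 ^ u) xn hadd2
        (by rw [hCn, hDn, hCy, hDy]; omega)
        (by rw [hCn, hDn, hDy]; omega)
        h
      have heq : x + (1+1) * 4 ^ u = x + 2 * 4 ^ u := by ring
      rwa [heq] at hgoal


open Polynomial in
lemma rec_key (a b c : Polynomial (ZMod 2)) (s : ℕ) :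
    X^(8*s) * (X^(8*s) * a + X^(2*s) * b) + X^(2*s) * (X^(8*s) * b + X^(2*s) * c)
      = X^(8*(2*s)) * a + X^(2*(2*s)) * c := by
  have hself : (X:Polynomial (ZMod 2))^(10*s) * b + X^(10*s) * b = 0 :=
    CharTwo.add_self_eq_zero _
  have expand : X^(8*s) * (X^(8*s) * a + X^(2*s) * b) + X^(2*s) * (X^(8*s) * b + X^(2*s) * c)
      = X^(8*(2*s)) * a + X^(2*(2*s)) * c + ((X:Polynomial (ZMod 2))^(10*s) * b + X^(10*s) * b) := by
    ring
  rw [expand, hself, add_zero]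

open Polynomial in
lemma rec_pow (A : ℕ → Polynomial (ZMod 2)) (r : ℕ)
    (hrec : ∀ n, Odd n → A (n + 8*r) = X^(8*r) * A n + X^(2*r) * A (n + 2*r)) :
    ∀ k n, Odd n → A (n + 8*(2^k*r)) = X^(8*(2^k*r)) * A n + X^(2*(2^k*r)) * A (n + 2*(2^k*r)) := by
  intro k
  induction k with
  | zero => intro n hn; simpa using hrec n hn
  | succ k ihk =>
    intro n hn
    obtain ⟨s, hs⟩ : ∃ s, 2^k*r = s := ⟨_, rfl⟩
    rw [hs] at ihk
    have hs2 : 2^(k+1)*r = 2*s := by rw [pow_succ, ← hs]; ring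
    rw [hs2]
    have hodd2 : Odd (n + 2*s) := hn.add_even ⟨s, by ring⟩
    have hodd8 : Odd (n + 8*s) := hn.add_even ⟨4*s, by ring⟩
    have h0 := ihk n hn
    have h2 := ihk (n + 2*s) hodd2
    have h8 := ihk (n + 8*s) hodd8
    have i1 : n + 8*(2*s) = (n + 8*s) + 8*s := by ring
    rw [i1, h8]
    have i2 : n + 8*s + 2*s = (n + 2*s) + 8*s := by ring
    rw [i2, h2, h0]
    have i3 : n + 2*s + 2*s = n + 2*(2*s) := by ring
    rw [i3, rec_key]

end NSAux


theorem stmt_9 (g : ℕ → ℕ) (hg0 : g 0 = 0)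
    (hge : ∀ n, g (2 * n) = 4 * g n)
    (hgo : ∀ n, g (2 * n + 1) = g (2 * n) + 1)
    (r : ℕ) (hr : ∃ e : ℕ, r = 2 ^ e)
    (A : ℕ → Polynomial (ZMod 2))
    (hodd : ∀ n, Odd n → ∀ m, (A n).coeff m ≠ 0 → Odd m)
    (hrec : ∀ n, Odd n → A (n + 8 * r) = X ^ (8 * r) * A n + X ^ (2 * r) * A (n + 2 * r))
    (hinit : ∀ n, Odd n → n < 8 * r ^ 2 → ∀ a b, n = 1 + 2 * g a + 4 * g b →
      ∀ m, (A n).coeff m ≠ 0 → ∃ c d, m = 1 + 2 * g c + 4 * g d ∧ prec c d a b) :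
    ∀ n, Odd n → 0 < n → ∀ a b, n = 1 + 2 * g a + 4 * g b →
      ∀ m, (A n).coeff m ≠ 0 → ∃ c d, m = 1 + 2 * g c + 4 * g d ∧ prec c d a b := by
  obtain ⟨e, he⟩ := hr
  have hgG : ∀ n, g n = NSAux.G n := by
    intro n
    induction n using Nat.strong_induction_on with
    | _ n ih =>
      rcases Nat.eq_zero_or_pos n with h0 | hp
      · subst h0; rw [hg0, NSAux.G_zero]
      · rcases Nat.even_or_odd n with ⟨k, hk⟩ | ⟨k, hk⟩
        · subst hk
          have hk' : k + k = 2 * k := by ring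
          rw [hk', hge k, ih k (by omega), NSAux.G_step (2*k)]
          have h2 : 2 * k / 2 = k := by omega
          rw [h2]; omega
        · subst hk
          rw [hgo k, hge k, ih k (by omega), NSAux.G_step (2*k+1)]
          have h2 : (2 * k + 1) / 2 = k := by omega
          rw [h2]; omega
  have hencC : ∀ c d : ℕ, NSAux.C (NSAux.G c + 2 * NSAux.G d) = c :=
    fun c d => (NSAux.encode (c+d) c d le_rfl).1
  have hencD : ∀ c d : ℕ, NSAux.D (NSAux.G c + 2 * NSAux.G d) = d :=
    fun c d => (NSAux.encode (c+d) c d le_rfl).2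
  have hcode : ∀ x : ℕ, 2 * x + 1 = 1 + 2 * g (NSAux.C x) + 4 * g (NSAux.D x) := by
    intro x
    rw [hgG, hgG]
    have := NSAux.decode x
    omega
  intro n
  induction n using Nat.strong_induction_on with
  | _ n ih =>
    intro hoddn hpos a b hab m hm
    by_cases hsmall : n < 8 * r ^ 2
    · exact hinit n hoddn hsmall a b hab m hm
    · push_neg at hsmall
      have hnodd : n % 2 = 1 := Nat.odd_iff.mp hoddn
      have h8r : 8 * r ^ 2 = 2 ^ (2*e+3) := by rw [he]; ring
      have hn0 : n ≠ 0 := by omega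
      have hL1 : 2 ^ Nat.log 2 n ≤ n := Nat.pow_log_le_self 2 hn0
      have hL2 : n < 2 ^ (Nat.log 2 n + 1) := Nat.lt_pow_succ_log_self (by norm_num) n
      have hLe : 2*e + 3 ≤ Nat.log 2 n := by
        have hh : (2:ℕ) ^ (2*e+3) ≤ n := by omega
        exact (Nat.le_log_iff_pow_le (by norm_num) hn0).2 hh
      set t := Nat.log 2 n - 3 with htdef
      have ht3 : t + 3 = Nat.log 2 n := by omega
      have hte : e ≤ t := by omega
      have p1 : (2:ℕ)^(t+1) = 2 * 2^t := by ring
      have p2 : (2:ℕ)^(t+2) = 4 * 2^t := by ring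
      have p3 : (2:ℕ)^(t+3) = 8 * 2^t := by ring
      have hnlb : 2 ^ (t+3) < n := by
        have hh : 2^(t+3) ≤ n := by rw [ht3]; exact hL1
        omega
      have hnub : n < 2 ^ (t+4) := by
        have hh : t+4 = Nat.log 2 n + 1 := by omega
        rw [hh]; exact hL2
      have p4 : (2:ℕ)^(t+4) = 16 * 2^t := by ring
      set xn := (n-1)/2 with hxndef
      set n₀ := n - 8 * 2^t with hn₀def
      set n₁ := n - 6 * 2^t with hn₁def
      have hoddn₀ : Odd n₀ := Nat.odd_iff.mpr (by omega)
      have hoddn₁ : Odd n₁ := Nat.odd_iff.mpr (by omega)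
      have hrelk := NSAux.rec_pow A r hrec (t - e) n₀ hoddn₀
      have hsr : 2 ^ (t-e) * r = 2 ^ t := by
        rw [he, ← pow_add]
        congr 1
        omega
      rw [hsr] at hrelk
      have hidx : n₀ + 8 * 2^t = n := by omega
      have hidx2 : n₀ + 2 * 2^t = n₁ := by omega
      rw [hidx, hidx2] at hrelk
      rw [hrelk, Polynomial.coeff_add] at hm
      have hor : (X^(8*2^t) * A n₀).coeff m ≠ 0 ∨ (X^(2*2^t) * A n₁).coeff m ≠ 0 := by
        by_contra hcon
        push_neg at hcon
        rw [hcon.1, hcon.2] at hm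
        simp at hm
      have hxnl : 2^(t+2) ≤ xn := by omega
      have hxnu : xn < 2^(t+3) := by omega
      rw [hgG, hgG] at hab
      have hxnval : xn = NSAux.G a + 2 * NSAux.G b := by omega
      have haC : NSAux.C xn = a := by rw [hxnval]; exact hencC a b
      have hbD : NSAux.D xn = b := by rw [hxnval]; exact hencD a b
      rcases hor with hbr | hbr
      · rw [mul_comm, Polynomial.coeff_mul_X_pow'] at hbr
        have hle : 8*2^t ≤ m := by
          by_contra hno
          rw [if_neg hno] at hbr
          exact hbr rfl
        rw [if_pos hle] at hbr
        have hpos₀ : 0 < n₀ := by omega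
        have hmodd : (m - 8*2^t) % 2 = 1 := Nat.odd_iff.mp (hodd n₀ hoddn₀ _ hbr)
        have hy₁ : n₀ = 2 * (xn - 2^(t+2)) + 1 := by omega
        have hcode₀ : n₀ = 1 + 2 * g (NSAux.C (xn - 2^(t+2))) + 4 * g (NSAux.D (xn - 2^(t+2))) := by
          rw [hy₁]; exact hcode _
        obtain ⟨c, d, hcd, hpc⟩ := ih n₀ (by omega) hoddn₀ hpos₀ _ _ hcode₀ (m - 8*2^t) hbr
        rw [hgG, hgG] at hcd
        set x' := (m - 8*2^t - 1)/2 with hx'def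
        have hx'val : x' = NSAux.G c + 2 * NSAux.G d := by omega
        have hc' : NSAux.C x' = c := by rw [hx'val]; exact hencC c d
        have hd' : NSAux.D x' = d := by rw [hx'val]; exact hencD c d
        have hprem : prec (NSAux.C x') (NSAux.D x') (NSAux.C (xn - 2^(t+2))) (NSAux.D (xn - 2^(t+2))) := by
          rw [hc', hd']; exact hpc
        have hk := NSAux.keyShift1 t xn x' hxnl hxnu hprem
        refine ⟨NSAux.C (x' + 2^(t+2)), NSAux.D (x' + 2^(t+2)), ?_, ?_⟩
        · have hm2 : m = 2 * (x' + 2^(t+2)) + 1 := by omega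
          rw [hm2]; exact hcode _
        · rw [← haC, ← hbD]; exact hk
      · rw [mul_comm, Polynomial.coeff_mul_X_pow'] at hbr
        have hle : 2*2^t ≤ m := by
          by_contra hno
          rw [if_neg hno] at hbr
          exact hbr rfl
        rw [if_pos hle] at hbr
        have hpos₁ : 0 < n₁ := by omega
        have hmodd : (m - 2*2^t) % 2 = 1 := Nat.odd_iff.mp (hodd n₁ hoddn₁ _ hbr)
        have hy₂ : n₁ = 2 * (xn - 3*2^t) + 1 := by omega
        have hcode₁ : n₁ = 1 + 2 * g (NSAux.C (xn - 3*2^t)) + 4 * g (NSAux.D (xn - 3*2^t)) := by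
          rw [hy₂]; exact hcode _
        obtain ⟨c, d, hcd, hpc⟩ := ih n₁ (by omega) hoddn₁ hpos₁ _ _ hcode₁ (m - 2*2^t) hbr
        rw [hgG, hgG] at hcd
        set x' := (m - 2*2^t - 1)/2 with hx'def
        have hx'val : x' = NSAux.G c + 2 * NSAux.G d := by omega
        have hc' : NSAux.C x' = c := by rw [hx'val]; exact hencC c d
        have hd' : NSAux.D x' = d := by rw [hx'val]; exact hencD c d
        have hprem : prec (NSAux.C x') (NSAux.D x') (NSAux.C (xn - 3*2^t)) (NSAux.D (xn - 3*2^t)) := by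
          rw [hc', hd']; exact hpc
        have hk := NSAux.keyShift2 t xn x' hxnl hxnu hprem
        refine ⟨NSAux.C (x' + 2^t), NSAux.D (x' + 2^t), ?_, ?_⟩
        · have hm2 : m = 2 * (x' + 2^t) + 1 := by omega
          rw [hm2]; exact hcode _
        · rw [← haC, ← hbD]; exact hk
end

section
/- Define δ_n ∈ (ℤ/2)[t] for odd n > 0 by δ₁ = δ₃ = δ₅ = 0, δ₇ = t³, and δ_{n+8} = t⁸·δ_n + t²·δ_{n+2}. Write the code of t^n as (a,b). If a > 0, then δ_n is a sum of monomials with code strictly preceding (a−1, b); if a = 0, then δ_n is a sum of monomials with code equal to or strictly preceding (0, b−1). -/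
open Polynomial

/-- Even-indexed binary digits of `u`, read as a binary number. -/
def NSA : ℕ → ℕ
  | u => if h : u = 0 then 0 else u % 2 + 2 * NSA (u / 4)
  decreasing_by exact Nat.div_lt_self (Nat.pos_of_ne_zero h) (by norm_num)

/-- Odd-indexed binary digits of `u`, read as a binary number. -/
def NSB (u : ℕ) : ℕ := NSA (u / 2)

lemma NSA_zero : NSA 0 = 0 := by simp [NSA]

lemma NSA_eq (u : ℕ) : NSA u = u % 2 + 2 * NSA (u / 4) := by
  by_cases h : u = 0
  · subst h; simp [NSA_zero]
  · rw [NSA]; simp [h]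

lemma NSA_d0 (x : ℕ) : NSA (2 * x) = 2 * NSB x := by
  rw [NSA_eq (2 * x), NSB, show (2 * x) % 2 = 0 from by omega,
    show (2 * x) / 4 = x / 2 from by omega]
  omega

lemma NSA_d1 (x : ℕ) : NSA (2 * x + 1) = 2 * NSB x + 1 := by
  rw [NSA_eq (2 * x + 1), NSB, show (2 * x + 1) % 2 = 1 from by omega,
    show (2 * x + 1) / 4 = x / 2 from by omega]; ring

lemma NSB_d0 (x : ℕ) : NSB (2 * x) = NSA x := by
  unfold NSB; congr 1; omega

lemma NSB_d1 (x : ℕ) : NSB (2 * x + 1) = NSA x := by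
  unfold NSB; congr 1; omega

lemma NSB_zero : NSB 0 = 0 := by unfold NSB; simpa using NSA_zero

lemma NSA_v0 : NSA 0 = 0 := NSA_zero
lemma NSA_v1 : NSA 1 = 1 := by have := NSA_d1 0; simpa [NSB_zero] using this
lemma NSB_v0 : NSB 0 = 0 := NSB_zero
lemma NSB_v1 : NSB 1 = 0 := by have := NSB_d1 0; simpa [NSA_zero] using this
lemma NSA_v2 : NSA 2 = 0 := by have := NSA_d0 1; simpa [NSB_v1] using this
lemma NSA_v3 : NSA 3 = 1 := by have := NSA_d1 1; simpa [NSB_v1] using this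
lemma NSB_v2 : NSB 2 = 1 := by have := NSB_d0 1; simpa [NSA_v1] using this
lemma NSB_v3 : NSB 3 = 1 := by have := NSB_d1 1; simpa [NSA_v1] using this

lemma NSA_four (q r : ℕ) (h : r < 4) : NSA (4 * q + r) = r % 2 + 2 * NSA q := by
  rw [NSA_eq (4 * q + r), show (4 * q + r) % 2 = r % 2 from by omega,
    show (4 * q + r) / 4 = q from by omega]

lemma NSB_four (q r : ℕ) (h : r < 4) : NSB (4 * q + r) = r / 2 + 2 * NSB q := by
  unfold NSB
  rw [show (4 * q + r) / 2 = 2 * (q) + r / 2 from by omega]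
  rcases (by omega : r / 2 = 0 ∨ r / 2 = 1) with h2 | h2 <;> rw [h2]
  · rw [show 2 * q + 0 = 2 * q from by omega, NSA_d0, NSB]; omega
  · rw [NSA_d1, NSB]; omega

lemma lucas_step (i j : ℕ) (h : (i + j).choose i % 2 = 1) :
    ¬(i % 2 = 1 ∧ j % 2 = 1) ∧ (i / 2 + j / 2).choose (i / 2) % 2 = 1 := by
  have hl := Choose.choose_modEq_choose_mod_mul_choose_div_nat (p := 2) (n := i + j) (k := i)
  unfold Nat.ModEq at hl
  have hnb : ¬(i % 2 = 1 ∧ j % 2 = 1) := by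
    rintro ⟨hi, hj⟩
    rw [show (i + j) % 2 = 0 from by omega, hi] at hl
    simp [Nat.choose] at hl
    omega
  refine ⟨hnb, ?_⟩
  have hd : (i + j) / 2 = i / 2 + j / 2 := by omega
  rcases Nat.mod_two_eq_zero_or_one i with hi | hi <;>
    rcases Nat.mod_two_eq_zero_or_one j with hj | hj
  · rw [show (i + j) % 2 = 0 from by omega, hi, hd] at hl; simp [Nat.choose] at hl; omega
  · rw [show (i + j) % 2 = 1 from by omega, hi, hd] at hl; simp [Nat.choose] at hl; omega
  · rw [show (i + j) % 2 = 1 from by omega, hi, hd] at hl; simp [Nat.choose] at hl; omega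
  · exact absurd ⟨hi, hj⟩ hnb
/-- Recover `i` from `n = 7+6i+8j`, `m = 3+2i+8j`. -/
def NSI (n m : ℕ) : ℕ := (n - m - 4) / 4

/-- Recover `j`. -/
def NSJ (n m : ℕ) : ℕ := (m - 3 - 2 * NSI n m) / 8

def NSok (n m : ℕ) : Prop :=
  n = 7 + 6 * NSI n m + 8 * NSJ n m ∧ m = 3 + 2 * NSI n m + 8 * NSJ n m

instance (n m : ℕ) : Decidable (NSok n m) := by unfold NSok; infer_instance

/-- The coefficient of `X^m` in `δ n`. -/
noncomputable def NSval (n m : ℕ) : ZMod 2 :=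
  if NSok n m then ((NSI n m + NSJ n m).choose (NSI n m) : ZMod 2) else 0

lemma NSIJ_eq {n m i j : ℕ} (hn : n = 7 + 6 * i + 8 * j) (hm : m = 3 + 2 * i + 8 * j) :
    NSI n m = i ∧ NSJ n m = j := by
  have hI : NSI n m = i := by unfold NSI; omega
  refine ⟨hI, ?_⟩
  unfold NSJ; rw [hI]; omega

lemma NSok_of {n m i j : ℕ} (hn : n = 7 + 6 * i + 8 * j) (hm : m = 3 + 2 * i + 8 * j) :
    NSok n m := by
  obtain ⟨hI, hJ⟩ := NSIJ_eq hn hm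
  unfold NSok; rw [hI, hJ]; exact ⟨hn, hm⟩

lemma NSval_of {n m i j : ℕ} (hn : n = 7 + 6 * i + 8 * j) (hm : m = 3 + 2 * i + 8 * j) :
    NSval n m = ((i + j).choose i : ZMod 2) := by
  obtain ⟨hI, hJ⟩ := NSIJ_eq hn hm
  unfold NSval
  rw [if_pos (NSok_of hn hm), hI, hJ]

lemma NSval_zero {n m : ℕ} (h : ∀ i j : ℕ, ¬(n = 7 + 6 * i + 8 * j ∧ m = 3 + 2 * i + 8 * j)) :
    NSval n m = 0 := by
  unfold NSval
  rw [if_neg]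
  intro hok
  exact h (NSI n m) (NSJ n m) ⟨hok.1, hok.2⟩

section Delta

variable (δ : ℕ → Polynomial (ZMod 2))
variable (h1 : δ 1 = 0) (h3 : δ 3 = 0) (h5 : δ 5 = 0) (h7 : δ 7 = X ^ 3)
variable (hrec : ∀ n, Odd n → δ (n + 8) = X ^ 8 * δ n + X ^ 2 * δ (n + 2))

include h1 h3 h5 h7 hrec in
lemma deltaVal : ∀ n, Odd n → ∀ m, (δ n).coeff m = NSval n m := by
  intro n
  induction n using Nat.strong_induction_on with
  | _ n IH =>
    intro hodd m
    obtain ⟨k, hk⟩ := hodd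
    by_cases hsmall : n < 9
    · have hcase : n = 1 ∨ n = 3 ∨ n = 5 ∨ n = 7 := by omega
      have hz : ∀ p : Polynomial (ZMod 2), p = 0 → p.coeff m = NSval n m → True := fun _ _ _ => trivial
      rcases hcase with h | h | h | h
      · subst h; rw [h1, coeff_zero]; symm
        apply NSval_zero; rintro i j ⟨e1, e2⟩; omega
      · subst h; rw [h3, coeff_zero]; symm
        apply NSval_zero; rintro i j ⟨e1, e2⟩; omega
      · subst h; rw [h5, coeff_zero]; symm
        apply NSval_zero; rintro i j ⟨e1, e2⟩; omega
      · subst h; rw [h7, coeff_X_pow]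
        by_cases hm : m = 3
        · subst hm
          rw [if_pos rfl, NSval_of (i := 0) (j := 0) (by norm_num) (by norm_num)]
          norm_num
        · rw [if_neg hm]; symm
          apply NSval_zero; rintro i j ⟨e1, e2⟩; omega
    · -- n ≥ 9
      have hodd8 : Odd (n - 8) := ⟨k - 4, by omega⟩
      have hodd6 : Odd (n - 6) := ⟨k - 3, by omega⟩
      have hrw : δ n = X ^ 8 * δ (n - 8) + X ^ 2 * δ (n - 6) := by
        have h := hrec (n - 8) hodd8
        rw [show n - 8 + 8 = n from by omega, show n - 8 + 2 = n - 6 from by omega] at h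
        exact h
      rw [hrw, coeff_add, mul_comm ((X : Polynomial (ZMod 2)) ^ 8) _,
        mul_comm ((X : Polynomial (ZMod 2)) ^ 2) _, coeff_mul_X_pow', coeff_mul_X_pow',
        IH (n - 8) (by omega) hodd8, IH (n - 6) (by omega) hodd6]
      by_cases hok : NSok n m
      · obtain ⟨i, j, hn', hm'⟩ :
            ∃ i j : ℕ, n = 7 + 6 * i + 8 * j ∧ m = 3 + 2 * i + 8 * j :=
          ⟨NSI n m, NSJ n m, hok.1, hok.2⟩
        rw [NSval_of hn' hm']
        by_cases hj : j = 0
        · -- j = 0, so i ≥ 1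
          have hi : 1 ≤ i := by omega
          subst hj
          have ht1 : (if 8 ≤ m then NSval (n - 8) (m - 8) else 0) = 0 := by
            split
            · apply NSval_zero; rintro i'' j'' ⟨e1, e2⟩; omega
            · rfl
          rw [ht1, if_pos (show 2 ≤ m from by omega),
            NSval_of (i := i - 1) (j := 0) (by omega) (by omega)]
          rw [show i - 1 + 0 = i - 1 from by omega, show i + 0 = i from by omega,
            Nat.choose_self, show i = (i - 1) + 1 from by omega, Nat.choose_self]
          simp
        · by_cases hi : i = 0
          · -- i = 0, j ≥ 1
            subst hi
            have ht2 : (if 2 ≤ m then NSval (n - 6) (m - 2) else 0) = 0 := by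
              split
              · apply NSval_zero; rintro i'' j'' ⟨e1, e2⟩; omega
              · rfl
            rw [ht2, if_pos (show 8 ≤ m from by omega),
              NSval_of (i := 0) (j := j - 1) (by omega) (by omega)]
            simp
          · -- i ≥ 1, j ≥ 1
            rw [if_pos (show 8 ≤ m from by omega), if_pos (show 2 ≤ m from by omega),
              NSval_of (i := i) (j := j - 1) (by omega) (by omega),
              NSval_of (i := i - 1) (j := j) (by omega) (by omega)]
            obtain ⟨i', rfl⟩ : ∃ i', i = i' + 1 := ⟨i - 1, by omega⟩
            obtain ⟨j', rfl⟩ : ∃ j', j = j' + 1 := ⟨j - 1, by omega⟩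
            rw [show i' + 1 + (j' + 1 - 1) = i' + j' + 1 from by omega,
              show i' + 1 - 1 + (j' + 1) = i' + j' + 1 from by omega,
              show i' + 1 - 1 = i' from by omega,
              show i' + 1 + (j' + 1) = (i' + j' + 1) + 1 from by omega,
              Nat.choose_succ_succ (i' + j' + 1) i', Nat.cast_add]
            exact add_comm _ _
      · rw [NSval_zero (fun i j h => hok (NSok_of h.1 h.2))]
        have ht1 : (if 8 ≤ m then NSval (n - 8) (m - 8) else 0) = 0 := by
          split
          · apply NSval_zero; rintro i'' j'' ⟨e1, e2⟩
            exact hok (NSok_of (i := i'') (j := j'' + 1) (by omega) (by omega))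
          · rfl
        have ht2 : (if 2 ≤ m then NSval (n - 6) (m - 2) else 0) = 0 := by
          split
          · apply NSval_zero; rintro i'' j'' ⟨e1, e2⟩
            exact hok (NSok_of (i := i'' + 1) (j := j'') (by omega) (by omega))
          · rfl
        rw [ht1, ht2, add_zero]

end Delta

section Gcode

variable (g : ℕ → ℕ) (hg0 : g 0 = 0)
variable (hge : ∀ n, g (2 * n) = 4 * g n)
variable (hgo : ∀ n, g (2 * n + 1) = g (2 * n) + 1)

include hge hgo in
lemma g_half : ∀ a, g a = 4 * g (a / 2) + a % 2 := by
  intro a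
  have e1 := hge (a / 2)
  have e2 := hgo (a / 2)
  rcases Nat.mod_two_eq_zero_or_one a with h | h
  · have e3 : g a = g (2 * (a / 2)) := by congr 1; omega
    omega
  · have e3 : g a = g (2 * (a / 2) + 1) := by congr 1; omega
    omega

include hg0 hge hgo in
lemma gAB : ∀ u, g (NSA u) + 2 * g (NSB u) = u := by
  intro u
  induction u using Nat.strong_induction_on with
  | _ u IH =>
    by_cases h : u = 0
    · subst h
      rw [NSA_zero, NSB_zero, hg0]
    · have hu : u = 4 * (u / 4) + u % 4 := by omega
      have hA : NSA u = 2 * NSA (u / 4) + u % 4 % 2 := by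
        conv_lhs => rw [hu]
        rw [NSA_four _ _ (by omega)]; ring
      have hB : NSB u = 2 * NSB (u / 4) + u % 4 / 2 := by
        conv_lhs => rw [hu]
        rw [NSB_four _ _ (by omega)]; ring
      have hgA : g (NSA u) = 4 * g (NSA (u / 4)) + u % 4 % 2 := by
        rw [hA, g_half g hge hgo (2 * NSA (u / 4) + u % 4 % 2)]
        rw [show (2 * NSA (u / 4) + u % 4 % 2) / 2 = NSA (u / 4) from by omega,
          show (2 * NSA (u / 4) + u % 4 % 2) % 2 = u % 4 % 2 from by omega]
      have hgB : g (NSB u) = 4 * g (NSB (u / 4)) + u % 4 / 2 := by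
        rw [hB, g_half g hge hgo (2 * NSB (u / 4) + u % 4 / 2)]
        rw [show (2 * NSB (u / 4) + u % 4 / 2) / 2 = NSB (u / 4) from by omega,
          show (2 * NSB (u / 4) + u % 4 / 2) % 2 = u % 4 / 2 from by omega]
      have hIH := IH (u / 4) (by omega)
      omega

include hg0 hge hgo in
lemma ABg : ∀ s a b, a + b ≤ s → NSA (g a + 2 * g b) = a ∧ NSB (g a + 2 * g b) = b := by
  intro s
  induction s with
  | zero =>
    intro a b hab
    have ha : a = 0 := by omega
    have hb : b = 0 := by omega
    subst ha; subst hb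
    rw [hg0]
    norm_num [NSA_zero, NSB_zero]
  | succ s IH =>
    intro a b hab
    by_cases h0 : a = 0 ∧ b = 0
    · obtain ⟨ha, hb⟩ := h0; subst ha; subst hb
      rw [hg0]
      norm_num [NSA_zero, NSB_zero]
    · have ha := g_half g hge hgo a
      have hb := g_half g hge hgo b
      have hw : g a + 2 * g b
          = 4 * (g (a / 2) + 2 * g (b / 2)) + (a % 2 + 2 * (b % 2)) := by omega
      have hIH := IH (a / 2) (b / 2) (by omega)
      constructor
      · rw [hw, NSA_four _ _ (by omega)]
        omega
      · rw [hw, NSB_four _ _ (by omega)]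
        omega

end Gcode

/-- The 36 order facts for the nine offset shapes. -/
def Fact9 (i j : ℕ) : Prop :=
    NSA (3 * i + 4 * j + 3) + NSB (3 * i + 4 * j + 3) ≥ NSA (i + 4 * j + 1) + NSB (i + 4 * j + 1) + 1 ∧
    (NSA (3 * i + 4 * j + 3) + NSB (3 * i + 4 * j + 3) = NSA (i + 4 * j + 1) + NSB (i + 4 * j + 1) + 1 → NSB (3 * i + 4 * j + 3) ≥ NSB (i + 4 * j + 1) + 1) ∧
    NSA (3 * i + 4 * j + 3) + 2 * NSB (3 * i + 4 * j + 3) ≥ NSA (i + 4 * j + 1) + 2 * NSB (i + 4 * j + 1) + 2 ∧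
    (NSA (3 * i + 4 * j + 3) + 2 * NSB (3 * i + 4 * j + 3) = NSA (i + 4 * j + 1) + 2 * NSB (i + 4 * j + 1) + 2 → NSA (3 * i + 4 * j + 3) ≥ NSA (i + 4 * j + 1) + 0) ∧
    NSA (3 * i + 4 * j + 1) + NSB (3 * i + 4 * j + 1) ≥ NSA (i + 4 * j) + NSB (i + 4 * j) + 1 ∧
    (NSA (3 * i + 4 * j + 1) + NSB (3 * i + 4 * j + 1) = NSA (i + 4 * j) + NSB (i + 4 * j) + 1 → NSB (3 * i + 4 * j + 1) ≥ NSB (i + 4 * j) + 0) ∧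
    NSA (3 * i + 4 * j + 1) + 2 * NSB (3 * i + 4 * j + 1) ≥ NSA (i + 4 * j) + 2 * NSB (i + 4 * j) + 1 ∧
    (NSA (3 * i + 4 * j + 1) + 2 * NSB (3 * i + 4 * j + 1) = NSA (i + 4 * j) + 2 * NSB (i + 4 * j) + 1 → NSA (3 * i + 4 * j + 1) ≥ NSA (i + 4 * j) + 1) ∧
    NSA (3 * i + 4 * j + 3) + NSB (3 * i + 4 * j + 3) ≥ NSA (i + 4 * j + 2) + NSB (i + 4 * j + 2) + 1 ∧
    (NSA (3 * i + 4 * j + 3) + NSB (3 * i + 4 * j + 3) = NSA (i + 4 * j + 2) + NSB (i + 4 * j + 2) + 1 → NSB (3 * i + 4 * j + 3) ≥ NSB (i + 4 * j + 2) + 0) ∧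
    NSA (3 * i + 4 * j + 3) + 2 * NSB (3 * i + 4 * j + 3) ≥ NSA (i + 4 * j + 2) + 2 * NSB (i + 4 * j + 2) + 1 ∧
    (NSA (3 * i + 4 * j + 3) + 2 * NSB (3 * i + 4 * j + 3) = NSA (i + 4 * j + 2) + 2 * NSB (i + 4 * j + 2) + 1 → NSA (3 * i + 4 * j + 3) ≥ NSA (i + 4 * j + 2) + 1) ∧
    NSA (3 * i + 4 * j) + NSB (3 * i + 4 * j) ≥ NSA (i + 4 * j) + NSB (i + 4 * j) + 0 ∧
    (NSA (3 * i + 4 * j) + NSB (3 * i + 4 * j) = NSA (i + 4 * j) + NSB (i + 4 * j) + 0 → NSB (3 * i + 4 * j) ≥ NSB (i + 4 * j) + 0) ∧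
    NSA (3 * i + 4 * j) + 2 * NSB (3 * i + 4 * j) ≥ NSA (i + 4 * j) + 2 * NSB (i + 4 * j) + 0 ∧
    (NSA (3 * i + 4 * j) + 2 * NSB (3 * i + 4 * j) = NSA (i + 4 * j) + 2 * NSB (i + 4 * j) + 0 → NSA (3 * i + 4 * j) ≥ NSA (i + 4 * j) + 0) ∧
    NSA (3 * i + 4 * j + 2) + NSB (3 * i + 4 * j + 2) ≥ NSA (i + 4 * j + 2) + NSB (i + 4 * j + 2) + 0 ∧
    (NSA (3 * i + 4 * j + 2) + NSB (3 * i + 4 * j + 2) = NSA (i + 4 * j + 2) + NSB (i + 4 * j + 2) + 0 → NSB (3 * i + 4 * j + 2) ≥ NSB (i + 4 * j + 2) + 0) ∧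
    NSA (3 * i + 4 * j + 2) + 2 * NSB (3 * i + 4 * j + 2) ≥ NSA (i + 4 * j + 2) + 2 * NSB (i + 4 * j + 2) + 0 ∧
    (NSA (3 * i + 4 * j + 2) + 2 * NSB (3 * i + 4 * j + 2) = NSA (i + 4 * j + 2) + 2 * NSB (i + 4 * j + 2) + 0 → NSA (3 * i + 4 * j + 2) ≥ NSA (i + 4 * j + 2) + 0) ∧
    NSA (3 * i + 4 * j + 1) + NSB (3 * i + 4 * j + 1) ≥ NSA (i + 4 * j + 1) + NSB (i + 4 * j + 1) + 0 ∧
    (NSA (3 * i + 4 * j + 1) + NSB (3 * i + 4 * j + 1) = NSA (i + 4 * j + 1) + NSB (i + 4 * j + 1) + 0 → NSB (3 * i + 4 * j + 1) ≥ NSB (i + 4 * j + 1) + 0) ∧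
    NSA (3 * i + 4 * j + 1) + 2 * NSB (3 * i + 4 * j + 1) ≥ NSA (i + 4 * j + 1) + 2 * NSB (i + 4 * j + 1) + 0 ∧
    (NSA (3 * i + 4 * j + 1) + 2 * NSB (3 * i + 4 * j + 1) = NSA (i + 4 * j + 1) + 2 * NSB (i + 4 * j + 1) + 0 → NSA (3 * i + 4 * j + 1) ≥ NSA (i + 4 * j + 1) + 0) ∧
    NSA (3 * i + 4 * j + 2) + NSB (3 * i + 4 * j + 2) ≥ NSA (i + 4 * j + 1) + NSB (i + 4 * j + 1) + 0 ∧
    (NSA (3 * i + 4 * j + 2) + NSB (3 * i + 4 * j + 2) = NSA (i + 4 * j + 1) + NSB (i + 4 * j + 1) + 0 → NSB (3 * i + 4 * j + 2) ≥ NSB (i + 4 * j + 1) + 1) ∧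
    NSA (3 * i + 4 * j + 2) + 2 * NSB (3 * i + 4 * j + 2) ≥ NSA (i + 4 * j + 1) + 2 * NSB (i + 4 * j + 1) + 1 ∧
    (NSA (3 * i + 4 * j + 2) + 2 * NSB (3 * i + 4 * j + 2) = NSA (i + 4 * j + 1) + 2 * NSB (i + 4 * j + 1) + 1 → NSA (3 * i + 4 * j + 2) + 1 ≥ NSA (i + 4 * j + 1)) ∧
    NSA (3 * i + 4 * j + 3) + NSB (3 * i + 4 * j + 3) ≥ NSA (i + 4 * j + 3) + NSB (i + 4 * j + 3) + 0 ∧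
    (NSA (3 * i + 4 * j + 3) + NSB (3 * i + 4 * j + 3) = NSA (i + 4 * j + 3) + NSB (i + 4 * j + 3) + 0 → NSB (3 * i + 4 * j + 3) ≥ NSB (i + 4 * j + 3) + 0) ∧
    NSA (3 * i + 4 * j + 3) + 2 * NSB (3 * i + 4 * j + 3) ≥ NSA (i + 4 * j + 3) + 2 * NSB (i + 4 * j + 3) + 0 ∧
    (NSA (3 * i + 4 * j + 3) + 2 * NSB (3 * i + 4 * j + 3) = NSA (i + 4 * j + 3) + 2 * NSB (i + 4 * j + 3) + 0 → NSA (3 * i + 4 * j + 3) ≥ NSA (i + 4 * j + 3) + 0) ∧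
    NSA (3 * i + 4 * j + 2) + NSB (3 * i + 4 * j + 2) ≥ NSA (i + 4 * j) + NSB (i + 4 * j) + 1 ∧
    (NSA (3 * i + 4 * j + 2) + NSB (3 * i + 4 * j + 2) = NSA (i + 4 * j) + NSB (i + 4 * j) + 1 → NSB (3 * i + 4 * j + 2) ≥ NSB (i + 4 * j) + 1) ∧
    NSA (3 * i + 4 * j + 2) + 2 * NSB (3 * i + 4 * j + 2) ≥ NSA (i + 4 * j) + 2 * NSB (i + 4 * j) + 2 ∧
    (NSA (3 * i + 4 * j + 2) + 2 * NSB (3 * i + 4 * j + 2) = NSA (i + 4 * j) + 2 * NSB (i + 4 * j) + 2 → NSA (3 * i + 4 * j + 2) ≥ NSA (i + 4 * j) + 0)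

lemma fact9_zero : Fact9 0 0 := by
  simp only [Fact9]
  norm_num [NSA_v0, NSA_v1, NSA_v2, NSA_v3, NSB_v0, NSB_v1, NSB_v2, NSB_v3]

lemma NT : ∀ s i j, i + j ≤ s → (i + j).choose i % 2 = 1 → Fact9 i j := by
  intro s
  induction s with
  | zero =>
    intro i j hs _
    have hi : i = 0 := by omega
    have hj : j = 0 := by omega
    subst hi; subst hj; exact fact9_zero
  | succ s IH =>
    intro i j hs hch
    by_cases h0 : i = 0 ∧ j = 0
    · obtain ⟨hi, hj⟩ := h0; subst hi; subst hj; exact fact9_zero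
    have hl := lucas_step i j hch
    have H := IH (i / 2) (j / 2) (by omega) hl.2
    have hnb := hl.1
    simp only [Fact9] at H ⊢
    rcases Nat.mod_two_eq_zero_or_one i with hi | hi <;>
      rcases Nat.mod_two_eq_zero_or_one j with hj | hj
    · -- eps=0, eta=0
      have hxA3 : NSA (i + 4 * j + 3) = 2 * NSB ((i / 2) + 4 * (j / 2) + 1) + 1 := by rw [show i + 4 * j + 3 = 2 * ((i / 2) + 4 * (j / 2) + 1) + 1 from by omega, NSA_d1]
      have hxB3 : NSB (i + 4 * j + 3) = NSA ((i / 2) + 4 * (j / 2) + 1) := by rw [show i + 4 * j + 3 = 2 * ((i / 2) + 4 * (j / 2) + 1) + 1 from by omega, NSB_d1]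
      have hxA2 : NSA (i + 4 * j + 2) = 2 * NSB ((i / 2) + 4 * (j / 2) + 1) := by rw [show i + 4 * j + 2 = 2 * ((i / 2) + 4 * (j / 2) + 1) from by omega, NSA_d0]
      have hxB2 : NSB (i + 4 * j + 2) = NSA ((i / 2) + 4 * (j / 2) + 1) := by rw [show i + 4 * j + 2 = 2 * ((i / 2) + 4 * (j / 2) + 1) from by omega, NSB_d0]
      have hxA1 : NSA (i + 4 * j + 1) = 2 * NSB ((i / 2) + 4 * (j / 2)) + 1 := by rw [show i + 4 * j + 1 = 2 * ((i / 2) + 4 * (j / 2)) + 1 from by omega, NSA_d1]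
      have hxB1 : NSB (i + 4 * j + 1) = NSA ((i / 2) + 4 * (j / 2)) := by rw [show i + 4 * j + 1 = 2 * ((i / 2) + 4 * (j / 2)) + 1 from by omega, NSB_d1]
      have hxA0 : NSA (i + 4 * j) = 2 * NSB ((i / 2) + 4 * (j / 2)) := by rw [show i + 4 * j = 2 * ((i / 2) + 4 * (j / 2)) from by omega, NSA_d0]
      have hxB0 : NSB (i + 4 * j) = NSA ((i / 2) + 4 * (j / 2)) := by rw [show i + 4 * j = 2 * ((i / 2) + 4 * (j / 2)) from by omega, NSB_d0]
      have hyA3 : NSA (3 * i + 4 * j + 3) = 2 * NSB (3 * (i / 2) + 4 * (j / 2) + 1) + 1 := by rw [show 3 * i + 4 * j + 3 = 2 * (3 * (i / 2) + 4 * (j / 2) + 1) + 1 from by omega, NSA_d1]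
      have hyB3 : NSB (3 * i + 4 * j + 3) = NSA (3 * (i / 2) + 4 * (j / 2) + 1) := by rw [show 3 * i + 4 * j + 3 = 2 * (3 * (i / 2) + 4 * (j / 2) + 1) + 1 from by omega, NSB_d1]
      have hyA2 : NSA (3 * i + 4 * j + 2) = 2 * NSB (3 * (i / 2) + 4 * (j / 2) + 1) := by rw [show 3 * i + 4 * j + 2 = 2 * (3 * (i / 2) + 4 * (j / 2) + 1) from by omega, NSA_d0]
      have hyB2 : NSB (3 * i + 4 * j + 2) = NSA (3 * (i / 2) + 4 * (j / 2) + 1) := by rw [show 3 * i + 4 * j + 2 = 2 * (3 * (i / 2) + 4 * (j / 2) + 1) from by omega, NSB_d0]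
      have hyA1 : NSA (3 * i + 4 * j + 1) = 2 * NSB (3 * (i / 2) + 4 * (j / 2)) + 1 := by rw [show 3 * i + 4 * j + 1 = 2 * (3 * (i / 2) + 4 * (j / 2)) + 1 from by omega, NSA_d1]
      have hyB1 : NSB (3 * i + 4 * j + 1) = NSA (3 * (i / 2) + 4 * (j / 2)) := by rw [show 3 * i + 4 * j + 1 = 2 * (3 * (i / 2) + 4 * (j / 2)) + 1 from by omega, NSB_d1]
      have hyA0 : NSA (3 * i + 4 * j) = 2 * NSB (3 * (i / 2) + 4 * (j / 2)) := by rw [show 3 * i + 4 * j = 2 * (3 * (i / 2) + 4 * (j / 2)) from by omega, NSA_d0]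
      have hyB0 : NSB (3 * i + 4 * j) = NSA (3 * (i / 2) + 4 * (j / 2)) := by rw [show 3 * i + 4 * j = 2 * (3 * (i / 2) + 4 * (j / 2)) from by omega, NSB_d0]
      rw [hxA3, hxB3, hxA2, hxB2, hxA1, hxB1, hxA0, hxB0, hyA3, hyB3, hyA2, hyB2, hyA1, hyB1, hyA0, hyB0]
      omega
    · -- eps=0, eta=1
      have hxA3 : NSA (i + 4 * j + 3) = 2 * NSB ((i / 2) + 4 * (j / 2) + 3) + 1 := by rw [show i + 4 * j + 3 = 2 * ((i / 2) + 4 * (j / 2) + 3) + 1 from by omega, NSA_d1]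
      have hxB3 : NSB (i + 4 * j + 3) = NSA ((i / 2) + 4 * (j / 2) + 3) := by rw [show i + 4 * j + 3 = 2 * ((i / 2) + 4 * (j / 2) + 3) + 1 from by omega, NSB_d1]
      have hxA2 : NSA (i + 4 * j + 2) = 2 * NSB ((i / 2) + 4 * (j / 2) + 3) := by rw [show i + 4 * j + 2 = 2 * ((i / 2) + 4 * (j / 2) + 3) from by omega, NSA_d0]
      have hxB2 : NSB (i + 4 * j + 2) = NSA ((i / 2) + 4 * (j / 2) + 3) := by rw [show i + 4 * j + 2 = 2 * ((i / 2) + 4 * (j / 2) + 3) from by omega, NSB_d0]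
      have hxA1 : NSA (i + 4 * j + 1) = 2 * NSB ((i / 2) + 4 * (j / 2) + 2) + 1 := by rw [show i + 4 * j + 1 = 2 * ((i / 2) + 4 * (j / 2) + 2) + 1 from by omega, NSA_d1]
      have hxB1 : NSB (i + 4 * j + 1) = NSA ((i / 2) + 4 * (j / 2) + 2) := by rw [show i + 4 * j + 1 = 2 * ((i / 2) + 4 * (j / 2) + 2) + 1 from by omega, NSB_d1]
      have hxA0 : NSA (i + 4 * j) = 2 * NSB ((i / 2) + 4 * (j / 2) + 2) := by rw [show i + 4 * j = 2 * ((i / 2) + 4 * (j / 2) + 2) from by omega, NSA_d0]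
      have hxB0 : NSB (i + 4 * j) = NSA ((i / 2) + 4 * (j / 2) + 2) := by rw [show i + 4 * j = 2 * ((i / 2) + 4 * (j / 2) + 2) from by omega, NSB_d0]
      have hyA3 : NSA (3 * i + 4 * j + 3) = 2 * NSB (3 * (i / 2) + 4 * (j / 2) + 3) + 1 := by rw [show 3 * i + 4 * j + 3 = 2 * (3 * (i / 2) + 4 * (j / 2) + 3) + 1 from by omega, NSA_d1]
      have hyB3 : NSB (3 * i + 4 * j + 3) = NSA (3 * (i / 2) + 4 * (j / 2) + 3) := by rw [show 3 * i + 4 * j + 3 = 2 * (3 * (i / 2) + 4 * (j / 2) + 3) + 1 from by omega, NSB_d1]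
      have hyA2 : NSA (3 * i + 4 * j + 2) = 2 * NSB (3 * (i / 2) + 4 * (j / 2) + 3) := by rw [show 3 * i + 4 * j + 2 = 2 * (3 * (i / 2) + 4 * (j / 2) + 3) from by omega, NSA_d0]
      have hyB2 : NSB (3 * i + 4 * j + 2) = NSA (3 * (i / 2) + 4 * (j / 2) + 3) := by rw [show 3 * i + 4 * j + 2 = 2 * (3 * (i / 2) + 4 * (j / 2) + 3) from by omega, NSB_d0]
      have hyA1 : NSA (3 * i + 4 * j + 1) = 2 * NSB (3 * (i / 2) + 4 * (j / 2) + 2) + 1 := by rw [show 3 * i + 4 * j + 1 = 2 * (3 * (i / 2) + 4 * (j / 2) + 2) + 1 from by omega, NSA_d1]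
      have hyB1 : NSB (3 * i + 4 * j + 1) = NSA (3 * (i / 2) + 4 * (j / 2) + 2) := by rw [show 3 * i + 4 * j + 1 = 2 * (3 * (i / 2) + 4 * (j / 2) + 2) + 1 from by omega, NSB_d1]
      have hyA0 : NSA (3 * i + 4 * j) = 2 * NSB (3 * (i / 2) + 4 * (j / 2) + 2) := by rw [show 3 * i + 4 * j = 2 * (3 * (i / 2) + 4 * (j / 2) + 2) from by omega, NSA_d0]
      have hyB0 : NSB (3 * i + 4 * j) = NSA (3 * (i / 2) + 4 * (j / 2) + 2) := by rw [show 3 * i + 4 * j = 2 * (3 * (i / 2) + 4 * (j / 2) + 2) from by omega, NSB_d0]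
      rw [hxA3, hxB3, hxA2, hxB2, hxA1, hxB1, hxA0, hxB0, hyA3, hyB3, hyA2, hyB2, hyA1, hyB1, hyA0, hyB0]
      omega
    · -- eps=1, eta=0
      have hxA3 : NSA (i + 4 * j + 3) = 2 * NSB ((i / 2) + 4 * (j / 2) + 2) := by rw [show i + 4 * j + 3 = 2 * ((i / 2) + 4 * (j / 2) + 2) from by omega, NSA_d0]
      have hxB3 : NSB (i + 4 * j + 3) = NSA ((i / 2) + 4 * (j / 2) + 2) := by rw [show i + 4 * j + 3 = 2 * ((i / 2) + 4 * (j / 2) + 2) from by omega, NSB_d0]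
      have hxA2 : NSA (i + 4 * j + 2) = 2 * NSB ((i / 2) + 4 * (j / 2) + 1) + 1 := by rw [show i + 4 * j + 2 = 2 * ((i / 2) + 4 * (j / 2) + 1) + 1 from by omega, NSA_d1]
      have hxB2 : NSB (i + 4 * j + 2) = NSA ((i / 2) + 4 * (j / 2) + 1) := by rw [show i + 4 * j + 2 = 2 * ((i / 2) + 4 * (j / 2) + 1) + 1 from by omega, NSB_d1]
      have hxA1 : NSA (i + 4 * j + 1) = 2 * NSB ((i / 2) + 4 * (j / 2) + 1) := by rw [show i + 4 * j + 1 = 2 * ((i / 2) + 4 * (j / 2) + 1) from by omega, NSA_d0]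
      have hxB1 : NSB (i + 4 * j + 1) = NSA ((i / 2) + 4 * (j / 2) + 1) := by rw [show i + 4 * j + 1 = 2 * ((i / 2) + 4 * (j / 2) + 1) from by omega, NSB_d0]
      have hxA0 : NSA (i + 4 * j) = 2 * NSB ((i / 2) + 4 * (j / 2)) + 1 := by rw [show i + 4 * j = 2 * ((i / 2) + 4 * (j / 2)) + 1 from by omega, NSA_d1]
      have hxB0 : NSB (i + 4 * j) = NSA ((i / 2) + 4 * (j / 2)) := by rw [show i + 4 * j = 2 * ((i / 2) + 4 * (j / 2)) + 1 from by omega, NSB_d1]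
      have hyA3 : NSA (3 * i + 4 * j + 3) = 2 * NSB (3 * (i / 2) + 4 * (j / 2) + 3) := by rw [show 3 * i + 4 * j + 3 = 2 * (3 * (i / 2) + 4 * (j / 2) + 3) from by omega, NSA_d0]
      have hyB3 : NSB (3 * i + 4 * j + 3) = NSA (3 * (i / 2) + 4 * (j / 2) + 3) := by rw [show 3 * i + 4 * j + 3 = 2 * (3 * (i / 2) + 4 * (j / 2) + 3) from by omega, NSB_d0]
      have hyA2 : NSA (3 * i + 4 * j + 2) = 2 * NSB (3 * (i / 2) + 4 * (j / 2) + 2) + 1 := by rw [show 3 * i + 4 * j + 2 = 2 * (3 * (i / 2) + 4 * (j / 2) + 2) + 1 from by omega, NSA_d1]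
      have hyB2 : NSB (3 * i + 4 * j + 2) = NSA (3 * (i / 2) + 4 * (j / 2) + 2) := by rw [show 3 * i + 4 * j + 2 = 2 * (3 * (i / 2) + 4 * (j / 2) + 2) + 1 from by omega, NSB_d1]
      have hyA1 : NSA (3 * i + 4 * j + 1) = 2 * NSB (3 * (i / 2) + 4 * (j / 2) + 2) := by rw [show 3 * i + 4 * j + 1 = 2 * (3 * (i / 2) + 4 * (j / 2) + 2) from by omega, NSA_d0]
      have hyB1 : NSB (3 * i + 4 * j + 1) = NSA (3 * (i / 2) + 4 * (j / 2) + 2) := by rw [show 3 * i + 4 * j + 1 = 2 * (3 * (i / 2) + 4 * (j / 2) + 2) from by omega, NSB_d0]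
      have hyA0 : NSA (3 * i + 4 * j) = 2 * NSB (3 * (i / 2) + 4 * (j / 2) + 1) + 1 := by rw [show 3 * i + 4 * j = 2 * (3 * (i / 2) + 4 * (j / 2) + 1) + 1 from by omega, NSA_d1]
      have hyB0 : NSB (3 * i + 4 * j) = NSA (3 * (i / 2) + 4 * (j / 2) + 1) := by rw [show 3 * i + 4 * j = 2 * (3 * (i / 2) + 4 * (j / 2) + 1) + 1 from by omega, NSB_d1]
      rw [hxA3, hxB3, hxA2, hxB2, hxA1, hxB1, hxA0, hxB0, hyA3, hyB3, hyA2, hyB2, hyA1, hyB1, hyA0, hyB0]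
      omega
    · exact absurd ⟨hi, hj⟩ hnb

theorem stmt_13 (g : ℕ → ℕ) (hg0 : g 0 = 0)
    (hge : ∀ n, g (2 * n) = 4 * g n)
    (hgo : ∀ n, g (2 * n + 1) = g (2 * n) + 1)
    (δ : ℕ → Polynomial (ZMod 2))
    (h1 : δ 1 = 0) (h3 : δ 3 = 0) (h5 : δ 5 = 0) (h7 : δ 7 = X ^ 3)
    (hrec : ∀ n, Odd n → δ (n + 8) = X ^ 8 * δ n + X ^ 2 * δ (n + 2)) :
    ∀ n, Odd n → 0 < n → ∀ a b, n = 1 + 2 * g a + 4 * g b →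
      (0 < a → ∀ m, (δ n).coeff m ≠ 0 →
        ∃ c d, m = 1 + 2 * g c + 4 * g d ∧ prec c d (a - 1) b) ∧
      (a = 0 → ∀ m, (δ n).coeff m ≠ 0 →
        ∃ c d, m = 1 + 2 * g c + 4 * g d ∧ ((c, d) = (0, b - 1) ∨ prec c d 0 (b - 1))) := by
  intro n hodd _hpos a b hab
  have main : ∀ m, (δ n).coeff m ≠ 0 →
      ∃ c d, m = 1 + 2 * g c + 4 * g d ∧
        (c + d + 1 < a + b ∨ (c + d + 1 = a + b ∧ d < b)) := by
    intro m hm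
    rw [deltaVal δ h1 h3 h5 h7 hrec n hodd m] at hm
    unfold NSval at hm
    split at hm
    case isFalse => exact absurd rfl hm
    case isTrue hok =>
      have hch : (NSI n m + NSJ n m).choose (NSI n m) % 2 = 1 := by
        rcases Nat.even_or_odd ((NSI n m + NSJ n m).choose (NSI n m)) with he | ho
        · exfalso
          apply hm
          rw [ZMod.natCast_eq_zero_iff]
          exact he.two_dvd
        · obtain ⟨t, ht⟩ := ho; omega
      obtain ⟨i, j, hn', hm', hch⟩ :
          ∃ i j : ℕ, n = 7 + 6 * i + 8 * j ∧ m = 3 + 2 * i + 8 * j ∧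
            (i + j).choose i % 2 = 1 :=
        ⟨NSI n m, NSJ n m, hok.1, hok.2, hch⟩
      obtain ⟨hF1a, hF1b, -⟩ := NT (i + j) i j le_rfl hch
      have hy := gAB g hg0 hge hgo (3 * i + 4 * j + 3)
      have hx := gAB g hg0 hge hgo (i + 4 * j + 1)
      have hA := ABg g hg0 hge hgo (a + b) a b le_rfl
      have hab2 : g a + 2 * g b = 3 * i + 4 * j + 3 := by omega
      rw [hab2] at hA
      obtain ⟨hAa, hAb⟩ := hA
      refine ⟨NSA (i + 4 * j + 1), NSB (i + 4 * j + 1), by omega, ?_⟩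
      omega
  refine ⟨?_, ?_⟩
  · intro ha0 m hm
    obtain ⟨c, d, hcd, hord⟩ := main m hm
    exact ⟨c, d, hcd, by unfold prec; omega⟩
  · intro ha0 m hm
    obtain ⟨c, d, hcd, hord⟩ := main m hm
    refine ⟨c, d, hcd, ?_⟩
    by_cases hc : c = 0 ∧ d = b - 1
    · left; rw [hc.1, hc.2]
    · right; unfold prec; omega
end

section
/- Define α_n, β_n, γ_n, δ_n ∈ (ℤ/2)[t] for odd n > 0 by the common recursion A_{n+8} = t⁸·A_n + t²·A_{n+2} with initial values (α₁,α₃,α₅,α₇) = (0, t, 0, t⁵), (β₁,β₃,β₅,β₇) = (t, t³, t⁵, t⁷+t³), (γ₁,γ₃,γ₅,γ₇) = (0, 0, t³, t⁵), (δ₁,δ₃,δ₅,δ₇) = (0, 0, 0, t³). Then: if n ≡ 1 (mod 4), β_n and δ_n lie in the span of {t^m : m ≡ 1 mod 4} and α_n, γ_n lie in the span of {t^m : m ≡ 3 mod 4}; if n ≡ 3 (mod 4), the roles are reversed. -/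
open Polynomial

/-- Membership in the span of monomials `t^m` with `m ≡ 1 (mod 4)`. -/
def inV1 (f : Polynomial (ZMod 2)) : Prop := ∀ m, f.coeff m ≠ 0 → m % 4 = 1

/-- Membership in the span of monomials `t^m` with `m ≡ 3 (mod 4)`. -/
def inV3 (f : Polynomial (ZMod 2)) : Prop := ∀ m, f.coeff m ≠ 0 → m % 4 = 3

lemma inV1_zero : inV1 0 := by intro m hm; simp at hm

lemma inV3_zero : inV3 0 := by intro m hm; simp at hm

lemma inV1_pow {k : ℕ} (h : k % 4 = 1) : inV1 ((X : Polynomial (ZMod 2)) ^ k) := by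
  intro m hm
  rw [coeff_X_pow] at hm
  split at hm
  · omega
  · exact absurd rfl hm

lemma inV3_pow {k : ℕ} (h : k % 4 = 3) : inV3 ((X : Polynomial (ZMod 2)) ^ k) := by
  intro m hm
  rw [coeff_X_pow] at hm
  split at hm
  · omega
  · exact absurd rfl hm

lemma inV1_add {f g : Polynomial (ZMod 2)} (hf : inV1 f) (hg : inV1 g) : inV1 (f + g) := by
  intro m hm
  rw [coeff_add] at hm
  by_cases h : f.coeff m = 0
  · exact hg m (by intro h'; rw [h, h'] at hm; simp at hm)
  · exact hf m h

lemma inV3_add {f g : Polynomial (ZMod 2)} (hf : inV3 f) (hg : inV3 g) : inV3 (f + g) := by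
  intro m hm
  rw [coeff_add] at hm
  by_cases h : f.coeff m = 0
  · exact hg m (by intro h'; rw [h, h'] at hm; simp at hm)
  · exact hf m h

lemma shift_aux {f : Polynomial (ZMod 2)} {k a : ℕ}
    (hf : ∀ m, f.coeff m ≠ 0 → m % 4 = a) :
    ∀ m, ((X : Polynomial (ZMod 2)) ^ k * f).coeff m ≠ 0 → m % 4 = (a + k) % 4 := by
  intro m hm
  rw [mul_comm, coeff_mul_X_pow'] at hm
  split at hm
  · have h1 := hf _ hm
    omega
  · exact absurd rfl hm

lemma inV1_shift8 {f : Polynomial (ZMod 2)} (hf : inV1 f) :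
    inV1 ((X : Polynomial (ZMod 2)) ^ 8 * f) := shift_aux (a := 1) hf

lemma inV3_shift8 {f : Polynomial (ZMod 2)} (hf : inV3 f) :
    inV3 ((X : Polynomial (ZMod 2)) ^ 8 * f) := shift_aux (a := 3) hf

lemma inV1_shift2 {f : Polynomial (ZMod 2)} (hf : inV1 f) :
    inV3 ((X : Polynomial (ZMod 2)) ^ 2 * f) := shift_aux (a := 1) hf

lemma inV3_shift2 {f : Polynomial (ZMod 2)} (hf : inV3 f) :
    inV1 ((X : Polynomial (ZMod 2)) ^ 2 * f) := shift_aux (a := 3) hf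

theorem stmt_17 (α β γ δ : ℕ → Polynomial (ZMod 2))
    (hα1 : α 1 = 0) (hα3 : α 3 = X) (hα5 : α 5 = 0) (hα7 : α 7 = X ^ 5)
    (hβ1 : β 1 = X) (hβ3 : β 3 = X ^ 3) (hβ5 : β 5 = X ^ 5) (hβ7 : β 7 = X ^ 7 + X ^ 3)
    (hγ1 : γ 1 = 0) (hγ3 : γ 3 = 0) (hγ5 : γ 5 = X ^ 3) (hγ7 : γ 7 = X ^ 5)
    (hδ1 : δ 1 = 0) (hδ3 : δ 3 = 0) (hδ5 : δ 5 = 0) (hδ7 : δ 7 = X ^ 3)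
    (hrecα : ∀ n, Odd n → α (n + 8) = X ^ 8 * α n + X ^ 2 * α (n + 2))
    (hrecβ : ∀ n, Odd n → β (n + 8) = X ^ 8 * β n + X ^ 2 * β (n + 2))
    (hrecγ : ∀ n, Odd n → γ (n + 8) = X ^ 8 * γ n + X ^ 2 * γ (n + 2))
    (hrecδ : ∀ n, Odd n → δ (n + 8) = X ^ 8 * δ n + X ^ 2 * δ (n + 2)) :
    ∀ n, 0 < n →
      (n % 4 = 1 → inV1 (β n) ∧ inV1 (δ n) ∧ inV3 (α n) ∧ inV3 (γ n)) ∧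
      (n % 4 = 3 → inV1 (α n) ∧ inV1 (γ n) ∧ inV3 (β n) ∧ inV3 (δ n)) := by
  intro n
  induction n using Nat.strong_induction_on with
  | _ n ih =>
    intro hn
    rcases Nat.even_or_odd n with he | ho
    · have h2 : n % 2 = 0 := Nat.even_iff.mp he
      exact ⟨fun h => by omega, fun h => by omega⟩
    · have h2 : n % 2 = 1 := Nat.odd_iff.mp ho
      by_cases h8 : n < 8
      · interval_cases n
        · refine ⟨fun _ => ⟨?_, hδ1 ▸ inV1_zero, hα1 ▸ inV3_zero, hγ1 ▸ inV3_zero⟩,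
            fun h => by omega⟩
          rw [hβ1, ← pow_one (X : Polynomial (ZMod 2))]
          exact inV1_pow rfl
        · omega
        · refine ⟨fun h => by omega, fun _ => ?_⟩
          refine ⟨?_, hγ3 ▸ inV1_zero, hβ3 ▸ inV3_pow rfl, hδ3 ▸ inV3_zero⟩
          rw [hα3, ← pow_one (X : Polynomial (ZMod 2))]
          exact inV1_pow rfl
        · omega
        · exact ⟨fun _ => ⟨hβ5 ▸ inV1_pow rfl, hδ5 ▸ inV1_zero,
            hα5 ▸ inV3_zero, hγ5 ▸ inV3_pow rfl⟩, fun h => by omega⟩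
        · omega
        · exact ⟨fun h => by omega, fun _ =>
            ⟨hα7 ▸ inV1_pow rfl, hγ7 ▸ inV1_pow rfl,
             hβ7 ▸ inV3_add (inV3_pow rfl) (inV3_pow rfl), hδ7 ▸ inV3_pow rfl⟩⟩
      · -- n ≥ 8, odd
        obtain ⟨m, hm⟩ : ∃ m, n = m + 8 := ⟨n - 8, by omega⟩
        have hom : Odd m := by rw [Nat.odd_iff]; omega
        have ih1 := ih m (by omega) (by omega)
        have ih2 := ih (m + 2) (by omega) (by omega)
        subst hm
        rw [hrecα m hom, hrecβ m hom, hrecγ m hom, hrecδ m hom]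
        constructor
        · intro h
          have hm1 : m % 4 = 1 := by omega
          have hm2 : (m + 2) % 4 = 3 := by omega
          obtain ⟨b1, d1, a1, c1⟩ := ih1.1 hm1
          obtain ⟨a2, c2, b2, d2⟩ := ih2.2 hm2
          exact ⟨inV1_add (inV1_shift8 b1) (inV3_shift2 b2),
                 inV1_add (inV1_shift8 d1) (inV3_shift2 d2),
                 inV3_add (inV3_shift8 a1) (inV1_shift2 a2),
                 inV3_add (inV3_shift8 c1) (inV1_shift2 c2)⟩
        · intro h
          have hm1 : m % 4 = 3 := by omega
          have hm2 : (m + 2) % 4 = 1 := by omega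
          obtain ⟨a1, c1, b1, d1⟩ := ih1.2 hm1
          obtain ⟨b2, d2, a2, c2⟩ := ih2.1 hm2
          exact ⟨inV1_add (inV1_shift8 a1) (inV3_shift2 a2),
                 inV1_add (inV1_shift8 c1) (inV3_shift2 c2),
                 inV3_add (inV3_shift8 b1) (inV1_shift2 b2),
                 inV3_add (inV3_shift8 d1) (inV1_shift2 d2)⟩
end

section
/- Define polynomials P_k ∈ (ℤ/2)[w] for k ≡ 1,3,7,9 (mod 20), k > 0, by P_{10n−9} = w^{−3}α_n(w^{10}) + w^{−7}δ_n(w^{10}), P_{10n−7} = w^{−9}β_n(w^{10}) + w^{−1}δ_n(w^{10}), P_{10n−3} = w^{−1}α_n(w^{10}) + w^{−9}γ_n(w^{10}), P_{10n−1} = w^{−7}β_n(w^{10}) + w^{−3}γ_n(w^{10}), where n is odd. Then each P_k lies in (ℤ/2)[w], the P_k satisfy P_{k+80} = w^{80}·P_k + w^{20}·P_{k+20}, and P₁ = 0, P₃ = w, P₇ = 0, P₉ = w³. -/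
open Polynomial

theorem stmt_18 (α β γ δ : ℕ → Polynomial (ZMod 2))
    (hα1 : α 1 = 0) (hα3 : α 3 = X) (hα5 : α 5 = 0) (hα7 : α 7 = X ^ 5)
    (hβ1 : β 1 = X) (hβ3 : β 3 = X ^ 3) (hβ5 : β 5 = X ^ 5) (hβ7 : β 7 = X ^ 7 + X ^ 3)
    (hγ1 : γ 1 = 0) (hγ3 : γ 3 = 0) (hγ5 : γ 5 = X ^ 3) (hγ7 : γ 7 = X ^ 5)
    (hδ1 : δ 1 = 0) (hδ3 : δ 3 = 0) (hδ5 : δ 5 = 0) (hδ7 : δ 7 = X ^ 3)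
    (hrecα : ∀ n, Odd n → α (n + 8) = X ^ 8 * α n + X ^ 2 * α (n + 2))
    (hrecβ : ∀ n, Odd n → β (n + 8) = X ^ 8 * β n + X ^ 2 * β (n + 2))
    (hrecγ : ∀ n, Odd n → γ (n + 8) = X ^ 8 * γ n + X ^ 2 * γ (n + 2))
    (hrecδ : ∀ n, Odd n → δ (n + 8) = X ^ 8 * δ n + X ^ 2 * δ (n + 2)) :
    ∃ P : ℕ → Polynomial (ZMod 2),
      -- the defining formulas `P_{10n-9} = w⁻³αₙ(w¹⁰) + w⁻⁷δₙ(w¹⁰)` etc.,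
      -- cleared of negative powers of `w`:
      (∀ n, Odd n →
        X ^ 7 * P (10 * n - 9) = X ^ 4 * (α n).comp (X ^ 10) + (δ n).comp (X ^ 10) ∧
        X ^ 9 * P (10 * n - 7) = (β n).comp (X ^ 10) + X ^ 8 * (δ n).comp (X ^ 10) ∧
        X ^ 9 * P (10 * n - 3) = X ^ 8 * (α n).comp (X ^ 10) + (γ n).comp (X ^ 10) ∧
        X ^ 7 * P (10 * n - 1) = (β n).comp (X ^ 10) + X ^ 4 * (γ n).comp (X ^ 10)) ∧
      (∀ k, 0 < k → (k % 20 = 1 ∨ k % 20 = 3 ∨ k % 20 = 7 ∨ k % 20 = 9) →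
        P (k + 80) = X ^ 80 * P k + X ^ 20 * P (k + 20)) ∧
      P 1 = 0 ∧ P 3 = X ∧ P 7 = 0 ∧ P 9 = X ^ 3 := by
  -- every `α n`, ..., `δ n` (n odd) is divisible by X
  have key : ∀ n, Odd n → X ∣ α n ∧ X ∣ β n ∧ X ∣ γ n ∧ X ∣ δ n := by
    intro n
    induction n using Nat.strong_induction_on with
    | _ n ih =>
      intro hn
      have hXp : ∀ k : ℕ, k ≠ 0 → (X : Polynomial (ZMod 2)) ∣ X ^ k :=
        fun k hk => dvd_pow_self X hk
      rcases lt_or_ge n 8 with h | h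
      · interval_cases n <;> first
        | (exact absurd hn (by decide))
        | (refine ⟨?_, ?_, ?_, ?_⟩ <;>
            simp only [hα1, hα3, hα5, hα7, hβ1, hβ3, hβ5, hβ7,
              hγ1, hγ3, hγ5, hγ7, hδ1, hδ3, hδ5, hδ7] <;>
            first
              | exact dvd_zero X
              | exact dvd_rfl
              | exact hXp _ (by norm_num)
              | exact dvd_add (hXp _ (by norm_num)) (hXp _ (by norm_num)))
      · have hm : Odd (n - 8) := by
          obtain ⟨r, hr⟩ := hn; exact ⟨r - 4, by omega⟩
        have hm2 : Odd (n - 6) := by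
          obtain ⟨r, hr⟩ := hn; exact ⟨r - 3, by omega⟩
        have h1 := ih (n - 8) (by omega) hm
        have h2 := ih (n - 6) (by omega) hm2
        have e : n - 8 + 8 = n := by omega
        have e2 : n - 8 + 2 = n - 6 := by omega
        have ra := hrecα (n - 8) hm; have rb := hrecβ (n - 8) hm
        have rc := hrecγ (n - 8) hm; have rd := hrecδ (n - 8) hm
        rw [e, e2] at ra rb rc rd
        rw [ra, rb, rc, rd]
        refine ⟨?_, ?_, ?_, ?_⟩ <;>
          exact dvd_add (Dvd.dvd.mul_left (by tauto) _) (Dvd.dvd.mul_left (by tauto) _)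
  -- composition with X^10 turns divisibility by X into divisibility by X^10
  have comp10 : ∀ f : Polynomial (ZMod 2), X ∣ f → X ^ 10 ∣ f.comp (X ^ 10) := by
    rintro f ⟨g, rfl⟩
    exact ⟨g.comp (X ^ 10), by simp [mul_comp]⟩
  have dvd7 : (X : Polynomial (ZMod 2)) ^ 7 ∣ X ^ 10 := pow_dvd_pow X (by norm_num)
  have dvd9 : (X : Polynomial (ZMod 2)) ^ 9 ∣ X ^ 10 := pow_dvd_pow X (by norm_num)
  have hX7 : (X : Polynomial (ZMod 2)) ^ 7 ≠ 0 := pow_ne_zero 7 X_ne_zero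
  have hX9 : (X : Polynomial (ZMod 2)) ^ 9 ≠ 0 := pow_ne_zero 9 X_ne_zero
  -- the definition of P
  set P : ℕ → Polynomial (ZMod 2) := fun k =>
    if k % 20 = 1 then
      (X ^ 4 * (α ((k + 9) / 10)).comp (X ^ 10) + (δ ((k + 9) / 10)).comp (X ^ 10)) / X ^ 7
    else if k % 20 = 3 then
      ((β ((k + 7) / 10)).comp (X ^ 10) + X ^ 8 * (δ ((k + 7) / 10)).comp (X ^ 10)) / X ^ 9
    else if k % 20 = 7 then
      (X ^ 8 * (α ((k + 3) / 10)).comp (X ^ 10) + (γ ((k + 3) / 10)).comp (X ^ 10)) / X ^ 9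
    else
      ((β ((k + 1) / 10)).comp (X ^ 10) + X ^ 4 * (γ ((k + 1) / 10)).comp (X ^ 10)) / X ^ 7
    with hPdef
  have hP : ∀ n, Odd n →
      X ^ 7 * P (10 * n - 9) = X ^ 4 * (α n).comp (X ^ 10) + (δ n).comp (X ^ 10) ∧
      X ^ 9 * P (10 * n - 7) = (β n).comp (X ^ 10) + X ^ 8 * (δ n).comp (X ^ 10) ∧
      X ^ 9 * P (10 * n - 3) = X ^ 8 * (α n).comp (X ^ 10) + (γ n).comp (X ^ 10) ∧
      X ^ 7 * P (10 * n - 1) = (β n).comp (X ^ 10) + X ^ 4 * (γ n).comp (X ^ 10) := by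
    intro n hn
    obtain ⟨hda, hdb, hdc, hdd⟩ := key n hn
    obtain ⟨m, rfl⟩ := hn
    refine ⟨?_, ?_, ?_, ?_⟩
    · rw [hPdef]
      simp only [show (10 * (2 * m + 1) - 9) % 20 = 1 from by omega,
        show (10 * (2 * m + 1) - 9 + 9) / 10 = 2 * m + 1 from by omega, if_pos rfl]
      exact EuclideanDomain.mul_div_cancel' hX7
        (dvd_add (dvd_trans (dvd_trans dvd7 (comp10 _ hda)) (Dvd.intro_left _ rfl))
          (dvd_trans dvd7 (comp10 _ hdd)))
    · rw [hPdef]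
      simp only [show (10 * (2 * m + 1) - 7 + 7) / 10 = 2 * m + 1 from by omega,
        if_neg (show ¬(10 * (2 * m + 1) - 7) % 20 = 1 from by omega),
        if_pos (show (10 * (2 * m + 1) - 7) % 20 = 3 from by omega)]
      exact EuclideanDomain.mul_div_cancel' hX9
        (dvd_add (dvd_trans dvd9 (comp10 _ hdb))
          (dvd_trans (dvd_trans dvd9 (comp10 _ hdd)) (Dvd.intro_left _ rfl)))
    · rw [hPdef]
      simp only [if_neg (show ¬(10 * (2 * m + 1) - 3) % 20 = 1 from by omega),
        if_neg (show ¬(10 * (2 * m + 1) - 3) % 20 = 3 from by omega),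
        if_pos (show (10 * (2 * m + 1) - 3) % 20 = 7 from by omega),
        show (10 * (2 * m + 1) - 3 + 3) / 10 = 2 * m + 1 from by omega]
      exact EuclideanDomain.mul_div_cancel' hX9
        (dvd_add (dvd_trans (dvd_trans dvd9 (comp10 _ hda)) (Dvd.intro_left _ rfl))
          (dvd_trans dvd9 (comp10 _ hdc)))
    · rw [hPdef]
      simp only [if_neg (show ¬(10 * (2 * m + 1) - 1) % 20 = 1 from by omega),
        if_neg (show ¬(10 * (2 * m + 1) - 1) % 20 = 3 from by omega),
        if_neg (show ¬(10 * (2 * m + 1) - 1) % 20 = 7 from by omega),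
        show (10 * (2 * m + 1) - 1 + 1) / 10 = 2 * m + 1 from by omega]
      exact EuclideanDomain.mul_div_cancel' hX7
        (dvd_add (dvd_trans dvd7 (comp10 _ hdb))
          (dvd_trans (dvd_trans dvd7 (comp10 _ hdc)) (Dvd.intro_left _ rfl)))
  refine ⟨P, hP, ?_, ?_, ?_, ?_, ?_⟩
  · -- recursion
    intro k hk hcase
    have oddm : ∀ m : ℕ, Odd (2 * m + 1) := fun m => ⟨m, rfl⟩
    rcases hcase with h | h | h | h
    · obtain ⟨m, rfl⟩ : ∃ m, k = 20 * m + 1 := ⟨k / 20, by omega⟩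
      have e1 := (hP (2 * m + 1) (oddm m)).1
      have e2 := (hP (2 * m + 3) ⟨m + 1, by ring⟩).1
      have e3 := (hP (2 * m + 9) ⟨m + 4, by ring⟩).1
      rw [show 10 * (2 * m + 1) - 9 = 20 * m + 1 from by omega] at e1
      rw [show 10 * (2 * m + 3) - 9 = 20 * m + 1 + 20 from by omega] at e2
      rw [show 10 * (2 * m + 9) - 9 = 20 * m + 1 + 80 from by omega] at e3
      have ra := hrecα (2 * m + 1) (oddm m)
      have rd := hrecδ (2 * m + 1) (oddm m)
      rw [show 2 * m + 1 + 8 = 2 * m + 9 from by omega,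
        show 2 * m + 1 + 2 = 2 * m + 3 from by omega] at ra rd
      rw [ra, rd] at e3
      simp only [add_comp, mul_comp, pow_comp, X_comp] at e3
      apply mul_left_cancel₀ hX7
      linear_combination e3 - (X : Polynomial (ZMod 2)) ^ 80 * e1 -
        (X : Polynomial (ZMod 2)) ^ 20 * e2
    · obtain ⟨m, rfl⟩ : ∃ m, k = 20 * m + 3 := ⟨k / 20, by omega⟩
      have e1 := (hP (2 * m + 1) (oddm m)).2.1
      have e2 := (hP (2 * m + 3) ⟨m + 1, by ring⟩).2.1
      have e3 := (hP (2 * m + 9) ⟨m + 4, by ring⟩).2.1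
      rw [show 10 * (2 * m + 1) - 7 = 20 * m + 3 from by omega] at e1
      rw [show 10 * (2 * m + 3) - 7 = 20 * m + 3 + 20 from by omega] at e2
      rw [show 10 * (2 * m + 9) - 7 = 20 * m + 3 + 80 from by omega] at e3
      have rb := hrecβ (2 * m + 1) (oddm m)
      have rd := hrecδ (2 * m + 1) (oddm m)
      rw [show 2 * m + 1 + 8 = 2 * m + 9 from by omega,
        show 2 * m + 1 + 2 = 2 * m + 3 from by omega] at rb rd
      rw [rb, rd] at e3
      simp only [add_comp, mul_comp, pow_comp, X_comp] at e3
      apply mul_left_cancel₀ hX9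
      linear_combination e3 - (X : Polynomial (ZMod 2)) ^ 80 * e1 -
        (X : Polynomial (ZMod 2)) ^ 20 * e2
    · obtain ⟨m, rfl⟩ : ∃ m, k = 20 * m + 7 := ⟨k / 20, by omega⟩
      have e1 := (hP (2 * m + 1) (oddm m)).2.2.1
      have e2 := (hP (2 * m + 3) ⟨m + 1, by ring⟩).2.2.1
      have e3 := (hP (2 * m + 9) ⟨m + 4, by ring⟩).2.2.1
      rw [show 10 * (2 * m + 1) - 3 = 20 * m + 7 from by omega] at e1
      rw [show 10 * (2 * m + 3) - 3 = 20 * m + 7 + 20 from by omega] at e2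
      rw [show 10 * (2 * m + 9) - 3 = 20 * m + 7 + 80 from by omega] at e3
      have ra := hrecα (2 * m + 1) (oddm m)
      have rc := hrecγ (2 * m + 1) (oddm m)
      rw [show 2 * m + 1 + 8 = 2 * m + 9 from by omega,
        show 2 * m + 1 + 2 = 2 * m + 3 from by omega] at ra rc
      rw [ra, rc] at e3
      simp only [add_comp, mul_comp, pow_comp, X_comp] at e3
      apply mul_left_cancel₀ hX9
      linear_combination e3 - (X : Polynomial (ZMod 2)) ^ 80 * e1 -
        (X : Polynomial (ZMod 2)) ^ 20 * e2
    · obtain ⟨m, rfl⟩ : ∃ m, k = 20 * m + 9 := ⟨k / 20, by omega⟩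
      have e1 := (hP (2 * m + 1) (oddm m)).2.2.2
      have e2 := (hP (2 * m + 3) ⟨m + 1, by ring⟩).2.2.2
      have e3 := (hP (2 * m + 9) ⟨m + 4, by ring⟩).2.2.2
      rw [show 10 * (2 * m + 1) - 1 = 20 * m + 9 from by omega] at e1
      rw [show 10 * (2 * m + 3) - 1 = 20 * m + 9 + 20 from by omega] at e2
      rw [show 10 * (2 * m + 9) - 1 = 20 * m + 9 + 80 from by omega] at e3
      have rb := hrecβ (2 * m + 1) (oddm m)
      have rc := hrecγ (2 * m + 1) (oddm m)
      rw [show 2 * m + 1 + 8 = 2 * m + 9 from by omega,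
        show 2 * m + 1 + 2 = 2 * m + 3 from by omega] at rb rc
      rw [rb, rc] at e3
      simp only [add_comp, mul_comp, pow_comp, X_comp] at e3
      apply mul_left_cancel₀ hX7
      linear_combination e3 - (X : Polynomial (ZMod 2)) ^ 80 * e1 -
        (X : Polynomial (ZMod 2)) ^ 20 * e2
  · -- P 1 = 0
    have e := (hP 1 odd_one).1
    rw [show 10 * 1 - 9 = 1 from by norm_num, hα1, hδ1] at e
    simp only [zero_comp, mul_zero, add_zero] at e
    exact (mul_eq_zero.mp e).resolve_left hX7
  · -- P 3 = X
    have e := (hP 1 odd_one).2.1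
    rw [show 10 * 1 - 7 = 3 from by norm_num, hβ1, hδ1] at e
    simp only [zero_comp, mul_zero, add_zero, X_comp] at e
    apply mul_left_cancel₀ hX9
    rw [e]; ring
  · -- P 7 = 0
    have e := (hP 1 odd_one).2.2.1
    rw [show 10 * 1 - 3 = 7 from by norm_num, hα1, hγ1] at e
    simp only [zero_comp, mul_zero, add_zero, zero_add] at e
    exact (mul_eq_zero.mp e).resolve_left hX9
  · -- P 9 = X ^ 3
    have e := (hP 1 odd_one).2.2.2
    rw [show 10 * 1 - 1 = 9 from by norm_num, hβ1, hγ1] at e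
    simp only [zero_comp, mul_zero, add_zero, X_comp] at e
    apply mul_left_cancel₀ hX7
    rw [e]; ring
end
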